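/- arXiv:2501.10828 — 9 statements merged into one kernel-verified Lean document; each statement's English description precedes it below -/
import Mathlib

section
/- Let G be a connected graph, r a vertex of G, and P an isometric path in G with end-vertices x and y. If A is a set of vertices of P that forms an antichain with respect to r (i.e., for any two distinct a,b in A, neither lies on a shortest path from r through the other in the BFS-DAG rooted at r), then the number of edges of P is at least |d(r,x) - d(r,y)| + |A| - 1. -/
open SimpleGraph

variable {V : Type*}

/-- A walk is an isometric path if it is a path and its length equals the distance
between its end-vertices. -/
def IsometricPath (G : SimpleGraph V) {u v : V} (p : G.Walk u v) : Prop :=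
  p.IsPath ∧ p.length = G.dist u v

/-- `RootedCover G r k` : the vertices of every isometric path of `G` can be covered by
`k` many `r`-rooted isometric paths of `G`. -/
def RootedCover (G : SimpleGraph V) (r : V) (k : ℕ) : Prop :=
  ∀ ⦃u v : V⦄ (p : G.Walk u v), IsometricPath G p →
    ∃ Q : Fin k → Σ w : V, G.Walk r w,
      (∀ i, IsometricPath G (Q i).2) ∧
      ∀ x ∈ p.support, ∃ i, x ∈ (Q i).2.support

/-- The isometric path complexity of `G` relative to a root `r`. -/
noncomputable def ipcoR (G : SimpleGraph V) (r : V) : ℕ := sInf {k | RootedCover G r k}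

/-- The isometric path complexity of `G`. -/
noncomputable def ipco (G : SimpleGraph V) : ℕ := sInf {k | ∃ r, RootedCover G r k}

/-- The strong isometric path complexity of `G`. -/
noncomputable def sipco (G : SimpleGraph V) : ℕ := sInf {k | ∀ r, RootedCover G r k}

/-- One step of the BFS-DAG of `G` rooted at `r`: there is a directed edge from `y` to `x`
when `xy` is an edge of `G` and `y` is one step farther from `r` than `x`. -/
def BFSStep (G : SimpleGraph V) (r : V) (y x : V) : Prop :=
  G.Adj x y ∧ G.dist r y = G.dist r x + 1

/-- Reachability by a directed path in the BFS-DAG of `G` rooted at `r`. -/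
def BFSReach (G : SimpleGraph V) (r : V) (a b : V) : Prop :=
  Relation.ReflTransGen (BFSStep G r) a b

/-- A set of vertices is an antichain w.r.t. `r` if no element reaches another by a
directed path in the BFS-DAG rooted at `r`. -/
def IsBFSAntichain (G : SimpleGraph V) (r : V) (A : Finset V) : Prop :=
  ∀ a ∈ A, ∀ b ∈ A, a ≠ b → ¬ BFSReach G r a b

section mainAux
variable {G : SimpleGraph V}

lemma reach_aux (hG : G.Connected) (r : V) :
    ∀ {a b : V} (q : G.Walk a b), G.dist r a = G.dist r b + q.length →
      BFSReach G r a b := by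
  intro a b q
  induction q with
  | nil => intro _; exact Relation.ReflTransGen.refl
  | @cons a c b h q ih =>
    intro heq
    simp only [Walk.length_cons] at heq
    have hca : G.dist c a ≤ 1 := by
      have := G.dist_le (Walk.cons h.symm Walk.nil : G.Walk c a)
      simpa using this
    have h1 : G.dist r a ≤ G.dist r c + 1 :=
      le_trans (hG.dist_triangle (v:=c)) (by omega)
    have hbc : G.dist b c ≤ q.length := by
      have := G.dist_le q.reverse
      simpa [SimpleGraph.dist_comm] using this
    have h2 : G.dist r c ≤ G.dist r b + q.length :=
      le_trans (hG.dist_triangle (v:=b)) (by omega)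
    have e2 : G.dist r c = G.dist r b + q.length := by omega
    have e1 : G.dist r a = G.dist r c + 1 := by omega
    exact Relation.ReflTransGen.head ⟨h.symm, e1⟩ (ih e2)

lemma reach_of_dist' (hG : G.Connected) (r : V) {a b : V}
    (h : G.dist r a = G.dist r b + G.dist a b) : BFSReach G r a b := by
  obtain ⟨q, hq⟩ := hG.exists_walk_length_eq_dist a b
  exact reach_aux hG r q (by omega)

variable [DecidableEq V]

lemma iso_split (hG : G.Connected) {x z : V} (q : G.Walk x z)
    (hq : q.length = G.dist x z) {a : V} (ha : a ∈ q.support) :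
    (q.takeUntil a ha).length = G.dist x a ∧
    (q.dropUntil a ha).length = G.dist a z ∧
    G.dist x a + G.dist a z = G.dist x z := by
  have hsum : (q.takeUntil a ha).length + (q.dropUntil a ha).length = q.length := by
    have := congrArg Walk.length (q.take_spec ha)
    rwa [Walk.length_append] at this
  have h1 : G.dist x a ≤ (q.takeUntil a ha).length := G.dist_le _
  have h2 : G.dist a z ≤ (q.dropUntil a ha).length := G.dist_le _
  have h3 : G.dist x z ≤ G.dist x a + G.dist a z := hG.dist_triangle (v:=_)
  omega

lemma iso_add (hG : G.Connected) {x z : V} (q : G.Walk x z)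
    (hq : q.length = G.dist x z) {a b : V} (ha : a ∈ q.support)
    (hb : b ∈ (q.dropUntil a ha).support) :
    G.dist x a + G.dist a b = G.dist x b := by
  obtain ⟨hta, hda, hsa⟩ := iso_split hG q hq ha
  have hbq : b ∈ q.support := q.support_dropUntil_subset ha hb
  obtain ⟨-, -, hsb⟩ := iso_split hG q hq hbq
  set d := q.dropUntil a ha
  have hsum : (d.takeUntil b hb).length + (d.dropUntil b hb).length = d.length := by
    have := congrArg Walk.length (d.take_spec hb)
    rwa [Walk.length_append] at this
  have h1 : G.dist a b ≤ (d.takeUntil b hb).length := G.dist_le _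
  have h2 : G.dist b z ≤ (d.dropUntil b hb).length := G.dist_le _
  have h3 : G.dist x b ≤ G.dist x a + G.dist a b := hG.dist_triangle (v:=_)
  omega

lemma iso_cases (hG : G.Connected) {x z : V} (q : G.Walk x z)
    (hq : q.length = G.dist x z) {a b : V} (ha : a ∈ q.support) (hb : b ∈ q.support) :
    G.dist x a + G.dist a b = G.dist x b ∨ G.dist x b + G.dist b a = G.dist x a := by
  have hspec := q.take_spec ha
  rw [← hspec, Walk.mem_support_append_iff] at hb
  rcases hb with hb | hb
  · right
    obtain ⟨hta, -, -⟩ := iso_split hG q hq ha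
    exact iso_add hG (q.takeUntil a ha) hta hb (Walk.end_mem_support _)
  · left
    exact iso_add hG q hq ha hb
end mainAux


/-- If `P` is an isometric `(x,y)`-path of a connected graph `G` and `A` is an
antichain (w.r.t. a vertex `r`) of vertices of `P`, then
`|E(P)| ≥ |d(r,x) - d(r,y)| + |A| - 1`. -/
theorem length_ge_of_antichain (G : SimpleGraph V) (hG : G.Connected) (r : V)
    {x y : V} (p : G.Walk x y) (hp : IsometricPath G p)
    (A : Finset V) (hA : ∀ a ∈ A, a ∈ p.support) (hanti : IsBFSAntichain G r A) :
    Nat.dist (G.dist r x) (G.dist r y) + A.card ≤ p.length + 1 := by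
  classical
  obtain ⟨-, hlen⟩ := hp
  set n := p.length with hn
  set dx := G.dist r x with hdx
  set dy := G.dist r y with hdy
  -- basic bound
  have hB1a : dx ≤ dy + n := by
    refine le_trans (hG.dist_triangle (v:=y)) ?_
    have : G.dist y x ≤ n := by rw [SimpleGraph.dist_comm]; omega
    omega
  have hB1b : dy ≤ dx + n := by
    refine le_trans (hG.dist_triangle (v:=x)) ?_
    omega
  have hB1old : True := by
    · trivial
  -- per element facts
  have hsplit : ∀ a ∈ A, G.dist x a + G.dist a y = n := fun a ha => by
    obtain ⟨-, -, h⟩ := iso_split hG p hlen (hA a ha); omega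
  have hxa : ∀ a ∈ A, G.dist r a ≤ dx + G.dist x a := fun a ha =>
    hG.dist_triangle (v:=x)
  have hxa' : ∀ a ∈ A, dx ≤ G.dist r a + G.dist x a := fun a ha => by
    refine le_trans (hG.dist_triangle (v:=a)) ?_
    rw [SimpleGraph.dist_comm (u:=a)]
  have hya : ∀ a ∈ A, G.dist r a ≤ dy + G.dist a y := fun a ha => by
    refine le_trans (hG.dist_triangle (v:=y)) ?_
    rw [SimpleGraph.dist_comm (u:=y)]
  have hya' : ∀ a ∈ A, dy ≤ G.dist r a + G.dist a y := fun a ha =>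
    hG.dist_triangle (v:=a)
  -- pairwise : key injectivity ingredient
  have hkey : ∀ a ∈ A, ∀ b ∈ A, a ≠ b → G.dist r a ≠ G.dist r b + G.dist a b :=
    fun a ha b hb hne h => hanti a ha b hb hne (reach_of_dist' hG r h)
  rcases le_total dx dy with hcase | hcase
  · -- use ψ a = dist x a - dist r a  ∈ [-dx, n - dy]
    rw [Nat.dist_eq_sub_of_le hcase]
    have hcard : A.card ≤ (Finset.Icc (-(dx:ℤ)) ((n:ℤ) - dy)).card := by
      apply Finset.card_le_card_of_injOn (fun a => (G.dist x a : ℤ) - G.dist r a)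
      · intro a ha
        have := hsplit a ha; have := hxa a ha; have := hya' a ha
        simp only [Finset.mem_coe, Finset.mem_Icc]
        omega
      · intro a ha b hb heq
        by_contra hne
        dsimp only at heq
        have hcm : G.dist a b = G.dist b a := SimpleGraph.dist_comm
        rcases iso_cases hG p hlen (hA a (by simpa using ha)) (hA b (by simpa using hb))
          with h | h
        · exact hkey b (by simpa using hb) a (by simpa using ha) (Ne.symm hne) (by omega)
        · exact hkey a (by simpa using ha) b (by simpa using hb) hne (by omega)
    rw [Int.card_Icc] at hcard
    omega
  · -- use φ a = dist x a + dist r a ∈ [dx, n + dy]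
    rw [Nat.dist_eq_sub_of_le_right hcase]
    have hcard : A.card ≤ (Finset.Icc ((dx:ℤ)) ((n:ℤ) + dy)).card := by
      apply Finset.card_le_card_of_injOn (fun a => (G.dist x a : ℤ) + G.dist r a)
      · intro a ha
        have := hsplit a ha; have := hxa' a ha; have := hya a ha
        simp only [Finset.mem_coe, Finset.mem_Icc]
        omega
      · intro a ha b hb heq
        by_contra hne
        dsimp only at heq
        have hcm : G.dist a b = G.dist b a := SimpleGraph.dist_comm
        rcases iso_cases hG p hlen (hA a (by simpa using ha)) (hA b (by simpa using hb))
          with h | h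
        · exact hkey a (by simpa using ha) b (by simpa using hb) hne (by omega)
        · exact hkey b (by simpa using hb) a (by simpa using ha) (Ne.symm hne) (by omega)
    rw [Int.card_Icc] at hcard
    omega
end

section
/- For any connected graph G and any vertex r, the minimum number of r-rooted isometric paths needed to cover the vertices of any isometric path of G (i.e., ipco(G,r)) equals the maximum, over all isometric paths P of G, of the size of a largest antichain of V(P) in the BFS-DAG of G rooted at r. -/
open SimpleGraph

variable {V : Type*}

/-- The maximum, over all isometric paths `P` of `G`, of the size of a largest antichain of
vertices of `P` in the BFS-DAG of `G` rooted at `r`. -/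
noncomputable def maxPathAntichain (G : SimpleGraph V) (r : V) : ℕ :=
  sSup {n | ∃ (u v : V) (p : G.Walk u v) (A : Finset V),
    IsometricPath G p ∧ (∀ a ∈ A, a ∈ p.support) ∧ IsBFSAntichain G r A ∧ A.card = n}

section Dilworth

variable {α : Type*}

/-- `A` is an antichain for relation `le`. -/
def IsAC (le : α → α → Prop) (A : Finset α) : Prop :=
  ∀ a ∈ A, ∀ b ∈ A, a ≠ b → ¬ le a b

/-- `C` is a chain for relation `le`. -/
def IsCh (le : α → α → Prop) (C : Finset α) : Prop :=
  ∀ x ∈ C, ∀ y ∈ C, le x y ∨ le y x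

/-- The width of a finite set: size of its largest antichain. -/
noncomputable def wid (le : α → α → Prop) (F : Finset α) : ℕ :=
  sSup {n | ∃ A, A ⊆ F ∧ IsAC le A ∧ A.card = n}

lemma wid_zero_mem (le : α → α → Prop) (F : Finset α) :
    0 ∈ {n | ∃ A, A ⊆ F ∧ IsAC le A ∧ A.card = n} :=
  ⟨∅, Finset.empty_subset _, fun a ha => absurd ha (Finset.notMem_empty a), Finset.card_empty⟩

lemma wid_bdd (le : α → α → Prop) (F : Finset α) :
    BddAbove {n | ∃ A, A ⊆ F ∧ IsAC le A ∧ A.card = n} := by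
  refine ⟨F.card, ?_⟩
  rintro n ⟨A, hA, -, rfl⟩
  exact Finset.card_le_card hA

lemma le_wid {le : α → α → Prop} {F A : Finset α} (hAF : A ⊆ F) (hA : IsAC le A) :
    A.card ≤ wid le F :=
  le_csSup (wid_bdd le F) ⟨A, hAF, hA, rfl⟩

lemma wid_spec (le : α → α → Prop) (F : Finset α) :
    ∃ A, A ⊆ F ∧ IsAC le A ∧ A.card = wid le F :=
  Nat.sSup_mem ⟨0, wid_zero_mem le F⟩ (wid_bdd le F)

lemma wid_le {le : α → α → Prop} {F : Finset α} {k : ℕ}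
    (h : ∀ A, A ⊆ F → IsAC le A → A.card ≤ k) : wid le F ≤ k := by
  refine csSup_le ⟨0, wid_zero_mem le F⟩ ?_
  rintro n ⟨A, hAF, hA, rfl⟩
  exact h A hAF hA

/-- If `m` pairwise chains cover an antichain `A` with `m ≤ |A|`, then every chain
contains an element of `A`. -/
lemma hit_all {m : ℕ} {le : α → α → Prop} (D : Fin m → Finset α)
    (hch : ∀ i, IsCh le (D i)) {A : Finset α} (hA : IsAC le A)
    (hcov : ∀ x ∈ A, ∃ i, x ∈ D i) (hlen : m ≤ A.card) :
    ∀ i, ∃ x ∈ A, x ∈ D i := by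
  classical
  intro i
  have hex : ∀ x : α, ∃ j : Fin m, x ∈ A → x ∈ D j := by
    intro x
    by_cases hx : x ∈ A
    · obtain ⟨j, hj⟩ := hcov x hx
      exact ⟨j, fun _ => hj⟩
    · exact ⟨i, fun h => absurd h hx⟩
  choose g hg using hex
  have hinj : Set.InjOn g ↑A := by
    intro x hx y hy hxy
    by_contra hne
    rcases hch (g x) x (hg x hx) y (by rw [hxy]; exact hg y hy) with h | h
    · exact hA x hx y hy hne h
    · exact hA y hy x hx (Ne.symm hne) h
  have hcard : (A.image g).card = A.card := Finset.card_image_of_injOn hinj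
  have hsub : A.image g = Finset.univ := by
    apply Finset.eq_univ_of_card
    rw [hcard, Fintype.card_fin]
    exact le_antisymm (by
      calc A.card = (A.image g).card := hcard.symm
        _ ≤ (Finset.univ : Finset (Fin m)).card := Finset.card_le_card (Finset.subset_univ _)
        _ = m := by simp) hlen
  have : i ∈ A.image g := by rw [hsub]; exact Finset.mem_univ i
  obtain ⟨x, hxA, hxg⟩ := Finset.mem_image.mp this
  exact ⟨x, hxA, hxg ▸ hg x hxA⟩

/-- Dilworth's theorem (finite version, with a strictly monotone rank function). -/
theorem dilworth (le : α → α → Prop) (ρ : α → ℕ) (hrefl : ∀ a, le a a)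
    (htrans : ∀ {a b c}, le a b → le b c → le a c)
    (hrank : ∀ {a b}, le a b → a ≠ b → ρ a < ρ b) (F : Finset α) :
    ∃ l : List (Finset α), l.length ≤ wid le F ∧ (∀ C ∈ l, C ⊆ F ∧ IsCh le C) ∧
      ∀ x ∈ F, ∃ C ∈ l, x ∈ C := by
  classical
  induction F using Finset.strongInduction with
  | _ F IH =>
  rcases F.eq_empty_or_nonempty with rfl | hne
  · exact ⟨[], by simp, by simp, by simp⟩
  obtain ⟨a, haF, hamax⟩ := F.exists_max_image ρ hne
  set F' := F.erase a with hF'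
  have hF'F : F' ⊆ F := Finset.erase_subset _ _
  obtain ⟨l', hlen', hl'ch, hl'cov⟩ := IH F' (Finset.erase_ssubset haF)
  set k := wid le F' with hk
  set m := l'.length with hm
  -- disjointified chains
  set D : Fin m → Finset α := fun i =>
    l'.get i \ (Finset.univ.filter (fun j => j < i)).biUnion (fun j => l'.get j) with hD
  have hDsub : ∀ i, D i ⊆ l'.get i := fun i => Finset.sdiff_subset
  have hDF' : ∀ i, D i ⊆ F' := fun i => (hDsub i).trans (hl'ch _ (l'.get_mem _)).1
  have hDch : ∀ i, IsCh le (D i) := by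
    intro i x hx y hy
    exact (hl'ch _ (l'.get_mem _)).2 x (hDsub i hx) y (hDsub i hy)
  have hDdisj : ∀ i j, i ≠ j → Disjoint (D i) (D j) := by
    have key : ∀ i j : Fin m, i < j → Disjoint (D i) (D j) := by
      intro i j hij
      rw [Finset.disjoint_left]
      intro x hxi hxj
      have hx1 : x ∈ l'.get i := hDsub i hxi
      have : x ∉ (Finset.univ.filter (fun t => t < j)).biUnion (fun t => l'.get t) :=
        (Finset.mem_sdiff.mp hxj).2
      exact this (Finset.mem_biUnion.mpr ⟨i, Finset.mem_filter.mpr ⟨Finset.mem_univ _, hij⟩, hx1⟩)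
    intro i j hij
    rcases lt_or_gt_of_ne hij with h | h
    · exact key i j h
    · exact (key j i h).symm
  have hDcov : ∀ x ∈ F', ∃ i, x ∈ D i := by
    intro x hx
    obtain ⟨C, hCl, hxC⟩ := hl'cov x hx
    obtain ⟨i0, hi0⟩ := List.mem_iff_get.mp hCl
    have hne' : (Finset.univ.filter (fun j : Fin m => x ∈ l'.get j)).Nonempty :=
      ⟨i0, Finset.mem_filter.mpr ⟨Finset.mem_univ _, by rw [hi0]; exact hxC⟩⟩
    set i1 := (Finset.univ.filter (fun j : Fin m => x ∈ l'.get j)).min' hne' with hi1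
    have hxi1 : x ∈ l'.get i1 :=
      (Finset.mem_filter.mp ((Finset.univ.filter _).min'_mem hne')).2
    refine ⟨i1, Finset.mem_sdiff.mpr ⟨hxi1, ?_⟩⟩
    intro hmem
    obtain ⟨j, hj, hxj⟩ := Finset.mem_biUnion.mp hmem
    have hjlt : j < i1 := (Finset.mem_filter.mp hj).2
    have : i1 ≤ j := Finset.min'_le _ j (Finset.mem_filter.mpr ⟨Finset.mem_univ _, hxj⟩)
    exact absurd hjlt (not_lt.mpr this)
  -- maximum antichain of F'
  obtain ⟨Astar, hAstarF, hAstarAC, hAstarcard⟩ := wid_spec le F'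
  have hmk : m ≤ k := hlen'
  have hhit : ∀ i, ∃ x ∈ Astar, x ∈ D i :=
    hit_all D hDch hAstarAC (fun x hx => hDcov x (hAstarF hx)) (by rw [hAstarcard]; exact hmk)
  -- the top elements of each chain belonging to a k-antichain
  set S : Fin m → Finset α := fun i =>
    (D i).filter (fun x => ∃ B, B ⊆ F' ∧ IsAC le B ∧ B.card = k ∧ x ∈ B) with hS
  have hSne : ∀ i, (S i).Nonempty := by
    intro i
    obtain ⟨x, hxA, hxD⟩ := hhit i
    exact ⟨x, Finset.mem_filter.mpr ⟨hxD, Astar, hAstarF, hAstarAC, hAstarcard, hxA⟩⟩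
  have hexmax := fun i => (S i).exists_max_image ρ (hSne i)
  choose aF haFS haFmax using hexmax
  have haFD : ∀ i, aF i ∈ D i := fun i => (Finset.mem_filter.mp (haFS i)).1
  have haFF' : ∀ i, aF i ∈ F' := fun i => hDF' i (haFD i)
  have hSle : ∀ i, ∀ x ∈ S i, le x (aF i) := by
    intro i x hx
    rcases hDch i x ((Finset.filter_subset _ _) hx) (aF i) (haFD i) with h | h
    · exact h
    · by_cases hxa : aF i = x
      · rw [hxa]; exact hrefl x
      · exact absurd (haFmax i x hx) (not_le.mpr (lt_of_lt_of_le (hrank h hxa) le_rfl))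
  have hkwidF : k ≤ wid le F := by
    have := le_wid (hAstarF.trans hF'F) hAstarAC
    rwa [hAstarcard] at this
  by_cases hcase : ∃ i, le (aF i) a ∧ aF i ≠ a
  · -- Case 1
    obtain ⟨i, hia, hianE⟩ := hcase
    set K : Finset α := insert a ((D i).filter (fun x => le x (aF i))) with hK
    have haK : a ∈ K := Finset.mem_insert_self _ _
    have hKF : K ⊆ F := by
      intro x hx
      rcases Finset.mem_insert.mp hx with rfl | hx
      · exact haF
      · exact hF'F (hDF' i ((Finset.filter_subset _ _) hx))
    have hKch : IsCh le K := by
      intro x hx y hy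
      rcases Finset.mem_insert.mp hx with h1 | hx' <;> rcases Finset.mem_insert.mp hy with h2 | hy'
      · subst h1; subst h2; left; exact hrefl _
      · subst h1; right; exact htrans (Finset.mem_filter.mp hy').2 hia
      · subst h2; left; exact htrans (Finset.mem_filter.mp hx').2 hia
      · exact hDch i x ((Finset.filter_subset _ _) hx') y ((Finset.filter_subset _ _) hy')
    have hwFK : wid le (F \ K) ≤ k - 1 := by
      apply wid_le
      intro B hBF hBAC
      have hBa : a ∉ B := fun h => (Finset.mem_sdiff.mp (hBF h)).2 haK
      have hBF' : B ⊆ F' := by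
        intro x hx
        exact Finset.mem_erase.mpr ⟨fun h => hBa (h ▸ hx), (Finset.mem_sdiff.mp (hBF hx)).1⟩
      have hBk : B.card ≤ k := le_wid hBF' hBAC
      rcases lt_or_eq_of_le hBk with h | h
      · exact Nat.le_pred_of_lt h
      · exfalso
        have hhitB : ∃ x ∈ B, x ∈ D i :=
          hit_all D hDch hBAC (fun x hx => hDcov x (hBF' hx)) (by rw [h]; exact hmk) i
        obtain ⟨x, hxB, hxD⟩ := hhitB
        have hxS : x ∈ S i := Finset.mem_filter.mpr ⟨hxD, B, hBF', hBAC, h, hxB⟩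
        have hxK : x ∈ K := Finset.mem_insert.mpr (Or.inr (Finset.mem_filter.mpr ⟨hxD, hSle i x hxS⟩))
        exact (Finset.mem_sdiff.mp (hBF hxB)).2 hxK
    have hss : F \ K ⊂ F := by
      refine Finset.ssubset_iff_of_subset (Finset.sdiff_subset) |>.mpr ?_
      exact ⟨a, haF, fun h => (Finset.mem_sdiff.mp h).2 haK⟩
    obtain ⟨l'', h2len, h2ch, h2cov⟩ := IH (F \ K) hss
    refine ⟨l'' ++ [K], ?_, ?_, ?_⟩
    · have hk1 : 1 ≤ k := le_trans (Nat.succ_le_of_lt i.pos) hmk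
      have h3 : l''.length ≤ k - 1 := h2len.trans hwFK
      simp only [List.length_append, List.length_singleton]
      omega
    · intro C hC
      rcases List.mem_append.mp hC with h | h
      · exact ⟨(h2ch C h).1.trans Finset.sdiff_subset, (h2ch C h).2⟩
      · rw [List.mem_singleton.mp h]; exact ⟨hKF, hKch⟩
    · intro x hx
      by_cases hxK : x ∈ K
      · exact ⟨K, List.mem_append.mpr (Or.inr (List.mem_singleton.mpr rfl)), hxK⟩
      · obtain ⟨C, hCl, hxC⟩ := h2cov x (Finset.mem_sdiff.mpr ⟨hx, hxK⟩)
        exact ⟨C, List.mem_append.mpr (Or.inl hCl), hxC⟩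
  · -- Case 2
    push_neg at hcase
    have haFne : ∀ i, aF i ≠ a := by
      intro i h
      have : a ∈ F' := h ▸ haFF' i
      exact (Finset.mem_erase.mp this).1 rfl
    have hnotle : ∀ i, ¬ le (aF i) a := fun i h => haFne i (hcase i h)
    have haFinj : Function.Injective aF := by
      intro i j hij
      by_contra hne'
      exact Finset.disjoint_left.mp (hDdisj i j hne') (haFD i) (hij ▸ haFD j)
    set Anew : Finset α := insert a (Finset.univ.image aF) with hAnew
    have haimg : a ∉ Finset.univ.image aF := by
      intro h
      obtain ⟨i, -, hi⟩ := Finset.mem_image.mp h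
      exact haFne i hi
    have hAnewcard : Anew.card = m + 1 := by
      rw [Finset.card_insert_of_notMem haimg, Finset.card_image_of_injective _ haFinj,
        Finset.card_univ, Fintype.card_fin]
    have hAnewF : Anew ⊆ F := by
      intro x hx
      rcases Finset.mem_insert.mp hx with rfl | hx
      · exact haF
      · obtain ⟨i, -, rfl⟩ := Finset.mem_image.mp hx
        exact hF'F (haFF' i)
    have hAnewAC : IsAC le Anew := by
      intro u hu v hv huv hle
      rcases Finset.mem_insert.mp hu with h1 | hu' <;> rcases Finset.mem_insert.mp hv with h2 | hv'
      · exact huv (h1.trans h2.symm)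
      · -- u = a, le a (aF i) : contradicts maximality of ρ a
        subst h1
        obtain ⟨i, -, rfl⟩ := Finset.mem_image.mp hv'
        exact absurd (hamax _ (hF'F (haFF' i))) (not_le.mpr (hrank hle huv))
      · subst h2
        obtain ⟨i, -, rfl⟩ := Finset.mem_image.mp hu'
        exact hnotle i hle
      · obtain ⟨i, -, rfl⟩ := Finset.mem_image.mp hu'
        obtain ⟨j, -, rfl⟩ := Finset.mem_image.mp hv'
        -- le (aF i) (aF j), aF i ≠ aF j
        obtain ⟨Bj, hBjF, hBjAC, hBjcard, hajBj⟩ :=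
          (Finset.mem_filter.mp (haFS j)).2
        have hhitB : ∃ x ∈ Bj, x ∈ D i :=
          hit_all D hDch hBjAC (fun x hx => hDcov x (hBjF hx)) (by rw [hBjcard]; exact hmk) i
        obtain ⟨x, hxB, hxD⟩ := hhitB
        have hxS : x ∈ S i := Finset.mem_filter.mpr ⟨hxD, Bj, hBjF, hBjAC, hBjcard, hxB⟩
        have hxai : le x (aF i) := hSle i x hxS
        have hxaj : le x (aF j) := htrans hxai hle
        by_cases hxeq : x = aF j
        · subst hxeq
          exact absurd (hrank hxai (Ne.symm huv)) (not_lt.mpr (le_of_lt (hrank hle huv)))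
        · exact hBjAC x hxB (aF j) hajBj hxeq hxaj
    refine ⟨l' ++ [{a}], ?_, ?_, ?_⟩
    · calc (l' ++ [{a}]).length = m + 1 := by simp [hm]
        _ = Anew.card := hAnewcard.symm
        _ ≤ wid le F := le_wid hAnewF hAnewAC
    · intro C hC
      rcases List.mem_append.mp hC with h | h
      · exact ⟨(hl'ch C h).1.trans hF'F, (hl'ch C h).2⟩
      · rw [List.mem_singleton.mp h]
        refine ⟨Finset.singleton_subset_iff.mpr haF, ?_⟩
        intro x hx y hy
        rw [Finset.mem_singleton.mp hx, Finset.mem_singleton.mp hy]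
        left; exact hrefl a
    · intro x hx
      by_cases hxa : x = a
      · exact ⟨{a}, List.mem_append.mpr (Or.inr (List.mem_singleton.mpr rfl)),
          Finset.mem_singleton.mpr hxa⟩
      · obtain ⟨C, hCl, hxC⟩ := hl'cov x (Finset.mem_erase.mpr ⟨hxa, hx⟩)
        exact ⟨C, List.mem_append.mpr (Or.inl hCl), hxC⟩

end Dilworth


section DescWalks

variable (G : SimpleGraph V) (r : V)

/-- A walk all of whose steps are BFS steps (descending toward `r`). -/
def Desc {a b : V} (p : G.Walk a b) : Prop :=
  ∀ d ∈ p.darts, BFSStep G r d.toProd.1 d.toProd.2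

variable {G r}

@[simp] lemma desc_nil {a : V} : Desc G r (SimpleGraph.Walk.nil : G.Walk a a) := by
  intro d hd
  simp [SimpleGraph.Walk.darts_nil] at hd

@[simp] lemma desc_cons {a c b : V} (h : G.Adj a c) (q : G.Walk c b) :
    Desc G r (SimpleGraph.Walk.cons h q) ↔ BFSStep G r a c ∧ Desc G r q := by
  unfold Desc
  rw [SimpleGraph.Walk.darts_cons, List.forall_mem_cons]

lemma desc_dist {a b : V} {p : G.Walk a b} (hp : Desc G r p) :
    G.dist r a = G.dist r b + p.length := by
  induction p with
  | nil => simp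
  | cons h q ih =>
    obtain ⟨hstep, hq⟩ := (desc_cons _ _).mp hp
    rw [SimpleGraph.Walk.length_cons, hstep.2, ih hq]
    ring

lemma desc_reach_all {a b : V} {p : G.Walk a b} (hp : Desc G r p) :
    ∀ x ∈ p.support, BFSReach G r a x := by
  induction p with
  | nil => intro x hx; rw [SimpleGraph.Walk.support_nil, List.mem_singleton] at hx
           subst hx; exact Relation.ReflTransGen.refl
  | cons h q ih =>
    obtain ⟨hstep, hq⟩ := (desc_cons _ _).mp hp
    intro x hx
    rw [SimpleGraph.Walk.support_cons, List.mem_cons] at hx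
    rcases hx with rfl | hx
    · exact Relation.ReflTransGen.refl
    · exact Relation.ReflTransGen.head hstep (ih hq x hx)

lemma desc_all_reach {a b : V} {p : G.Walk a b} (hp : Desc G r p) :
    ∀ x ∈ p.support, BFSReach G r x b := by
  induction p with
  | nil => intro x hx; rw [SimpleGraph.Walk.support_nil, List.mem_singleton] at hx
           subst hx; exact Relation.ReflTransGen.refl
  | cons h q ih =>
    obtain ⟨hstep, hq⟩ := (desc_cons _ _).mp hp
    intro x hx
    rw [SimpleGraph.Walk.support_cons, List.mem_cons] at hx
    rcases hx with rfl | hx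
    · exact Relation.ReflTransGen.head hstep
        (ih hq _ (SimpleGraph.Walk.start_mem_support q))
    · exact ih hq x hx

lemma desc_comparable {a b : V} {p : G.Walk a b} (hp : Desc G r p) :
    ∀ x ∈ p.support, ∀ y ∈ p.support, BFSReach G r x y ∨ BFSReach G r y x := by
  induction p with
  | nil =>
    intro x hx y hy
    rw [SimpleGraph.Walk.support_nil, List.mem_singleton] at hx hy
    subst hx; subst hy; left; exact Relation.ReflTransGen.refl
  | cons h q ih =>
    obtain ⟨hstep, hq⟩ := (desc_cons _ _).mp hp
    intro x hx y hy
    rw [SimpleGraph.Walk.support_cons, List.mem_cons] at hx hy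
    rcases hx with rfl | hx
    · rcases hy with rfl | hy
      · left; exact Relation.ReflTransGen.refl
      · left; exact desc_reach_all (p := SimpleGraph.Walk.cons h q) hp y
          (by rw [SimpleGraph.Walk.support_cons, List.mem_cons]; exact Or.inr hy)
    · rcases hy with rfl | hy
      · right; exact desc_reach_all (p := SimpleGraph.Walk.cons h q) hp x
          (by rw [SimpleGraph.Walk.support_cons, List.mem_cons]; exact Or.inr hx)
      · exact ih hq x hx y hy

lemma reach_dist_le {a b : V} (h : BFSReach G r a b) : G.dist r b ≤ G.dist r a := by
  induction h with
  | refl => exact le_rfl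
  | tail _ hstep ih =>
    have := hstep.2
    omega

lemma reach_dist_lt {a b : V} (h : BFSReach G r a b) (hne : a ≠ b) :
    G.dist r b < G.dist r a := by
  induction h with
  | refl => exact absurd rfl hne
  | @tail c d hac hstep ih =>
    have h1 : G.dist r c = G.dist r d + 1 := hstep.2
    have h2 : G.dist r c ≤ G.dist r a := reach_dist_le hac
    omega

lemma reach_antisymm {a b : V} (h1 : BFSReach G r a b) (h2 : BFSReach G r b a) : a = b := by
  by_contra hne
  exact absurd (reach_dist_lt h2 (Ne.symm hne)) (not_lt.mpr (le_of_lt (reach_dist_lt h1 hne)))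

lemma desc_isPath {a b : V} {p : G.Walk a b} (hp : Desc G r p) : p.IsPath := by
  induction p with
  | nil => exact SimpleGraph.Walk.IsPath.nil
  | cons h q ih =>
    obtain ⟨hstep, hq⟩ := (desc_cons _ _).mp hp
    refine (ih hq).cons ?_
    intro hmem
    have h1 : BFSReach G r _ _ := desc_reach_all hq _ hmem
    have h2 : G.dist r _ ≤ G.dist r _ := reach_dist_le h1
    have h3 : G.dist r _ = G.dist r _ + 1 := hstep.2
    omega

lemma desc_append {a b c : V} {p : G.Walk a b} {q : G.Walk b c}
    (hp : Desc G r p) (hq : Desc G r q) : Desc G r (p.append q) := by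
  induction p with
  | nil => simpa using hq
  | cons h p' ih =>
    obtain ⟨hstep, hp'⟩ := (desc_cons _ _).mp hp
    exact (desc_cons _ _).mpr ⟨hstep, ih hp' hq⟩


lemma reach_exists_desc {a b : V} (h : BFSReach G r a b) :
    ∃ p : G.Walk a b, Desc G r p := by
  induction h with
  | refl => exact ⟨SimpleGraph.Walk.nil, desc_nil⟩
  | @tail c d hac hstep ih =>
    obtain ⟨p, hp⟩ := ih
    exact ⟨p.append (SimpleGraph.Walk.cons hstep.1.symm SimpleGraph.Walk.nil),
      desc_append hp ((desc_cons _ _).mpr ⟨hstep, desc_nil⟩)⟩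

lemma desc_of_shortest_aux (hG : G.Connected) : ∀ (n : ℕ) {a : V} (p : G.Walk a r),
    p.length = n → p.length = G.dist r a → Desc G r p := by
  intro n
  induction n with
  | zero =>
    intro a p hl _
    cases p with
    | nil => exact desc_nil
    | cons h q => simp at hl
  | succ n ihn =>
    intro a p hl hlen
    cases p with
    | nil => simp at hl
    | @cons _ c _ h q =>
      rw [SimpleGraph.Walk.length_cons] at hlen hl
      have h1 : G.dist r c ≤ q.length := by
        rw [SimpleGraph.dist_comm]; exact SimpleGraph.dist_le q
      have h2 : G.dist r a ≤ G.dist r c + 1 := by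
        have htri := hG.dist_triangle (u := r) (v := c) (w := a)
        have hca : G.dist c a ≤ 1 := by
          have := SimpleGraph.dist_le (SimpleGraph.Walk.cons h.symm SimpleGraph.Walk.nil)
          simpa using this
        omega
      have hqs : q.length = G.dist r c := by omega
      exact (desc_cons _ _).mpr ⟨⟨h.symm, by omega⟩, ihn q (by omega) hqs⟩

lemma desc_of_shortest (hG : G.Connected) {a : V} (p : G.Walk a r)
    (hlen : p.length = G.dist r a) : Desc G r p :=
  desc_of_shortest_aux hG p.length p rfl hlen

/-- Every vertex has a descending walk to the root. -/
lemma exists_desc_to_root (hG : G.Connected) (a : V) :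
    ∃ p : G.Walk a r, Desc G r p := by
  obtain ⟨w, hw⟩ := (hG r a).exists_walk_length_eq_dist
  refine ⟨w.reverse, desc_of_shortest hG w.reverse ?_⟩
  rw [SimpleGraph.Walk.length_reverse, hw]

/-- The reverse of a descending walk to the root is a rooted isometric path. -/
lemma desc_isometric {a : V} {p : G.Walk a r} (hp : Desc G r p) :
    IsometricPath G p.reverse := by
  constructor
  · exact (desc_isPath hp).reverse
  · rw [SimpleGraph.Walk.length_reverse]
    have := desc_dist hp
    rw [SimpleGraph.dist_self] at this
    omega

/-- A rooted isometric path, reversed, is a descending walk. -/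
lemma isometric_desc (hG : G.Connected) {w : V} {Q : G.Walk r w} (hQ : IsometricPath G Q) :
    Desc G r Q.reverse := by
  apply desc_of_shortest hG
  rw [SimpleGraph.Walk.length_reverse, hQ.2, SimpleGraph.dist_comm]

end DescWalks


section ChainPath

variable {G : SimpleGraph V} {r : V}

lemma nil_isometric : IsometricPath G (SimpleGraph.Walk.nil : G.Walk r r) :=
  ⟨SimpleGraph.Walk.IsPath.nil, by simp [SimpleGraph.dist_self]⟩

lemma chain_walk_aux (hG : G.Connected) : ∀ (n : ℕ) (C : Finset V), C.card ≤ n →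
    (∀ x ∈ C, ∀ y ∈ C, BFSReach G r x y ∨ BFSReach G r y x) →
    ∃ (a : V) (p : G.Walk a r), Desc G r p ∧ (∀ x ∈ C, x ∈ p.support) ∧
      (C.Nonempty → a ∈ C) := by
  classical
  intro n
  induction n with
  | zero =>
    intro C hcard _
    have : C = ∅ := Finset.card_eq_zero.mp (le_antisymm hcard (Nat.zero_le _))
    subst this
    exact ⟨r, SimpleGraph.Walk.nil, desc_nil, by simp, fun h => absurd h (by simp)⟩
  | succ n IH =>
    intro C hcard hch
    rcases C.eq_empty_or_nonempty with rfl | hne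
    · exact ⟨r, SimpleGraph.Walk.nil, desc_nil, by simp, fun h => absurd h (by simp)⟩
    obtain ⟨a, haC, hamax⟩ := C.exists_max_image (G.dist r) hne
    have hreach : ∀ x ∈ C, BFSReach G r a x := by
      intro x hx
      rcases hch a haC x hx with h | h
      · exact h
      · by_cases hxa : x = a
        · subst hxa; exact Relation.ReflTransGen.refl
        · exact absurd (reach_dist_lt h hxa) (not_lt.mpr (hamax x hx))
    set C' := C.erase a with hC'
    have hcard' : C'.card ≤ n := by
      have h1 : C'.card = C.card - 1 := Finset.card_erase_of_mem haC
      have h2 : 1 ≤ C.card := Finset.card_pos.mpr hne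
      omega
    rcases C'.eq_empty_or_nonempty with hem | hne'
    · -- C = {a}
      obtain ⟨p, hp⟩ := exists_desc_to_root hG a
      refine ⟨a, p, hp, ?_, fun _ => haC⟩
      intro x hx
      have : x = a := by
        by_contra hxa
        have : x ∈ C' := Finset.mem_erase.mpr ⟨hxa, hx⟩
        rw [hem] at this
        exact absurd this (Finset.notMem_empty x)
      subst this
      exact SimpleGraph.Walk.start_mem_support p
    · obtain ⟨b, p', hp', hcov', hbC'⟩ := IH C' hcard'
        (fun x hx y hy => hch x (Finset.erase_subset _ _ hx) y (Finset.erase_subset _ _ hy))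
      have hreachab : BFSReach G r a b :=
        hreach b (Finset.erase_subset _ _ (hbC' hne'))
      obtain ⟨q, hq⟩ := reach_exists_desc hreachab
      refine ⟨a, q.append p', desc_append hq hp', ?_, fun _ => haC⟩
      intro x hx
      rw [SimpleGraph.Walk.mem_support_append_iff]
      by_cases hxa : x = a
      · subst hxa; exact Or.inl (SimpleGraph.Walk.start_mem_support q)
      · exact Or.inr (hcov' x (Finset.mem_erase.mpr ⟨hxa, hx⟩))

/-- Every BFS-chain is covered by a rooted isometric path. -/
lemma chain_isopath (hG : G.Connected) (C : Finset V)
    (hch : ∀ x ∈ C, ∀ y ∈ C, BFSReach G r x y ∨ BFSReach G r y x) :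
    ∃ s : Σ w : V, G.Walk r w, IsometricPath G s.2 ∧ ∀ x ∈ C, x ∈ s.2.support := by
  obtain ⟨a, p, hp, hcov, -⟩ := chain_walk_aux hG C.card C le_rfl hch
  refine ⟨⟨a, p.reverse⟩, desc_isometric hp, ?_⟩
  intro x hx
  rw [SimpleGraph.Walk.support_reverse, List.mem_reverse]
  exact hcov x hx

end ChainPath

/-- For any connected graph `G` and any vertex `r`, the minimum number of
`r`-rooted isometric paths needed to cover the vertices of any isometric path of `G`
equals the maximum size of an antichain of an isometric path in the BFS-DAG rooted at `r`. -/
theorem ipcoR_eq_maxPathAntichain [Fintype V] (G : SimpleGraph V) (hG : G.Connected)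
    (r : V) : ipcoR G r = maxPathAntichain G r := by
  classical
  set SA : Set ℕ := {n | ∃ (u v : V) (p : G.Walk u v) (A : Finset V),
    IsometricPath G p ∧ (∀ a ∈ A, a ∈ p.support) ∧ IsBFSAntichain G r A ∧ A.card = n} with hSAdef
  have hMdef : maxPathAntichain G r = sSup SA := rfl
  set M := maxPathAntichain G r with hM
  have hSA0 : 0 ∈ SA := ⟨r, r, SimpleGraph.Walk.nil, ∅, nil_isometric,
    fun a ha => absurd ha (Finset.notMem_empty a),
    fun a ha => absurd ha (Finset.notMem_empty a), rfl⟩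
  have hSAbdd : BddAbove SA := by
    refine ⟨Fintype.card V, ?_⟩
    rintro n ⟨u, v, p, A, -, -, -, rfl⟩
    exact (Finset.card_le_univ A).trans_eq Finset.card_univ
  -- comparability of vertices on a rooted isometric path
  have hcomp : ∀ (w : V) (Q : G.Walk r w), IsometricPath G Q →
      ∀ x ∈ Q.support, ∀ y ∈ Q.support,
        BFSReach G r x y ∨ BFSReach G r y x := by
    intro w Q hQ x hx y hy
    have hd := isometric_desc hG hQ
    have hx' : x ∈ Q.reverse.support := by
      rw [SimpleGraph.Walk.support_reverse]; exact List.mem_reverse.mpr hx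
    have hy' : y ∈ Q.reverse.support := by
      rw [SimpleGraph.Walk.support_reverse]; exact List.mem_reverse.mpr hy
    exact desc_comparable hd x hx' y hy'
  -- Lower bound: every antichain size is at most every cover size
  have hlower : ∀ n ∈ SA, ∀ k, RootedCover G r k → n ≤ k := by
    rintro n ⟨u, v, p, A, hp, hAp, hAac, rfl⟩ k hk
    obtain ⟨Q, hQiso, hQcov⟩ := hk p hp
    have hex : ∀ x ∈ A, ∃ i : Fin k, x ∈ (Q i).2.support :=
      fun x hx => hQcov x (hAp x hx)
    set f : V → ℕ := fun x =>
      if h : ∃ i : Fin k, x ∈ (Q i).2.support then (h.choose : Fin k).val else 0 with hf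
    have hmaps : ∀ x ∈ A, f x ∈ Finset.range k := by
      intro x hx
      have h : ∃ i : Fin k, x ∈ (Q i).2.support := hex x hx
      simp only [hf, dif_pos h]
      exact Finset.mem_range.mpr h.choose.isLt
    have hinj : Set.InjOn f ↑A := by
      intro x hx y hy hxy
      by_contra hne
      have hxe : ∃ i : Fin k, x ∈ (Q i).2.support := hex x hx
      have hye : ∃ i : Fin k, y ∈ (Q i).2.support := hex y hy
      rw [hf] at hxy
      simp only [dif_pos hxe, dif_pos hye] at hxy
      have hij : hxe.choose = hye.choose := Fin.ext hxy
      have hxs : x ∈ (Q hxe.choose).2.support := hxe.choose_spec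
      have hys : y ∈ (Q hxe.choose).2.support := by rw [hij]; exact hye.choose_spec
      rcases hcomp (Q hxe.choose).1 (Q hxe.choose).2 (hQiso _) x hxs y hys with h | h
      · exact hAac x hx y hy hne h
      · exact hAac y hy x hx (Ne.symm hne) h
    calc A.card ≤ (Finset.range k).card := Finset.card_le_card_of_injOn f hmaps hinj
      _ = k := Finset.card_range k
  -- the order used for Dilworth
  set le' : V → V → Prop := fun a b => BFSReach G r b a with hle'
  -- width of any isometric path is at most M
  have hwidle : ∀ (u v : V) (p : G.Walk u v), IsometricPath G p →
      wid le' p.support.toFinset ≤ M := by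
    intro u v p hp
    apply wid_le
    intro A hAF hAac
    have hmem : A.card ∈ SA := by
      refine ⟨u, v, p, A, hp, ?_, ?_, rfl⟩
      · intro a ha
        exact List.mem_toFinset.mp (hAF ha)
      · intro a ha b hb hne
        exact hAac b hb a ha (Ne.symm hne)
    exact le_csSup hSAbdd hmem
  -- Upper bound : M covers
  have hMSC : RootedCover G r M := by
    intro u v p hp
    obtain ⟨l, hlen, hlch, hlcov⟩ := dilworth le' (G.dist r)
      (fun a => Relation.ReflTransGen.refl)
      (fun {a b c} hab hbc => Relation.ReflTransGen.trans hbc hab)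
      (fun {a b} hab hne => reach_dist_lt hab (Ne.symm hne))
      p.support.toFinset
    have hlenM : l.length ≤ M := hlen.trans (hwidle u v p hp)
    have hchoice : ∀ C : Finset V, ∃ s : Σ w : V, G.Walk r w, IsometricPath G s.2 ∧
        ((∀ x ∈ C, ∀ y ∈ C, BFSReach G r x y ∨ BFSReach G r y x) →
          ∀ x ∈ C, x ∈ s.2.support) := by
      intro C
      by_cases hch : ∀ x ∈ C, ∀ y ∈ C, BFSReach G r x y ∨ BFSReach G r y x
      · obtain ⟨s, hiso, hcov⟩ := chain_isopath hG C hch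
        exact ⟨s, hiso, fun _ => hcov⟩
      · exact ⟨⟨r, SimpleGraph.Walk.nil⟩, nil_isometric, fun h => absurd h hch⟩
    choose pathOf hisoOf hcovOf using hchoice
    refine ⟨fun i : Fin M => pathOf (l.getD (i : ℕ) ∅), fun i => hisoOf _, ?_⟩
    intro x hx
    have hxF : x ∈ p.support.toFinset := List.mem_toFinset.mpr hx
    obtain ⟨C, hCl, hxC⟩ := hlcov x hxF
    obtain ⟨i0, hi0⟩ := List.mem_iff_get.mp hCl
    have hiM : (i0 : ℕ) < M := lt_of_lt_of_le i0.isLt hlenM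
    refine ⟨⟨(i0 : ℕ), hiM⟩, ?_⟩
    show x ∈ (pathOf (l.getD (i0 : ℕ) ∅)).2.support
    have hget : l.getD (i0 : ℕ) ∅ = C := by
      rw [List.getD_eq_getElem l ∅ i0.isLt, ← hi0]
      rfl
    rw [hget]
    have hCch : ∀ a ∈ C, ∀ b ∈ C, BFSReach G r a b ∨ BFSReach G r b a := by
      intro a ha b hb
      rcases (hlch C hCl).2 a ha b hb with h | h
      · exact Or.inr h
      · exact Or.inl h
    exact hcovOf C hCch x hxC
  have hSCne : {k | RootedCover G r k}.Nonempty := ⟨M, hMSC⟩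
  have h1 : ipcoR G r ≤ M := Nat.sInf_le hMSC
  have h2 : M ≤ ipcoR G r := by
    have : sSup SA ≤ ipcoR G r := by
      apply csSup_le ⟨0, hSA0⟩
      intro n hn
      exact hlower n hn _ (Nat.sInf_mem hSCne)
    exact this
  exact le_antisymm h1 h2
end

section
/- For every integer t ≥ 1, if a graph class does not contain K_{2,t} as an asymptotic minor, then it does not contain U_t as an asymptotic minor, where U_t is the graph obtained from a path on t vertices by adding a universal vertex. Concretely: if for every K ≥ 12 some graph G in the class contains a K-fat minor model of U_t, then G contains a ⌊K/4⌋-fat minor model of K_{2,t}. -/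
open SimpleGraph

variable {V : Type*} {W : Type*}

/-- A `K`-fat minor model of `H` in `G`: connected branch sets `B w` for the vertices of
`H` and connected branch paths `P u v` for the edges of `H`, such that a branch set and a
branch path meet whenever they are incident, and any other pair among these subgraphs is
at distance at least `K` in `G`. -/
structure FatMinorModel (G : SimpleGraph V) (H : SimpleGraph W) (K : ℕ) where
  B : W → Set V
  P : W → W → Set V
  Psymm : ∀ u v, P u v = P v u
  Bnonempty : ∀ w, (B w).Nonempty
  Bconnected : ∀ w, (G.induce (B w)).Connected
  Pconnected : ∀ ⦃u v⦄, H.Adj u v → (G.induce (P u v)).Connected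
  meets : ∀ ⦃u v⦄, H.Adj u v → (B u ∩ P u v).Nonempty
  far_BB : ∀ ⦃u v⦄, u ≠ v → ∀ x ∈ B u, ∀ y ∈ B v, (K : ℕ∞) ≤ G.edist x y
  far_BP : ∀ ⦃u v w⦄, H.Adj u v → w ≠ u → w ≠ v →
    ∀ x ∈ B w, ∀ y ∈ P u v, (K : ℕ∞) ≤ G.edist x y
  far_PP : ∀ ⦃u v u' v'⦄, H.Adj u v → H.Adj u' v' → s(u, v) ≠ s(u', v') →
    ∀ x ∈ P u v, ∀ y ∈ P u' v', (K : ℕ∞) ≤ G.edist x y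

/-- `Ugraph t`: the graph obtained from a path on `t` vertices (the vertices `some i`,
consecutive ones adjacent) by adding a universal vertex `none`. -/
def Ugraph (t : ℕ) : SimpleGraph (Option (Fin t)) :=
  SimpleGraph.fromRel (fun a b =>
    a = none ∨ ∃ i j : Fin t, a = some i ∧ b = some j ∧ (i : ℕ) + 1 = (j : ℕ))

namespace FatAux

variable {V : Type*} {G : SimpleGraph V}

/-- distance from a vertex to a set -/
noncomputable def sdist (G : SimpleGraph V) (s : Set V) (x : V) : ℕ∞ :=
  ⨅ w ∈ s, G.edist x w

lemma sdist_le {s : Set V} {x w : V} (hw : w ∈ s) : sdist G s x ≤ G.edist x w :=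
  iInf₂_le w hw

lemma le_sdist {s : Set V} {x : V} {c : ℕ∞} (h : ∀ w ∈ s, c ≤ G.edist x w) :
    c ≤ sdist G s x := le_iInf₂ h

lemma sdist_exists {s : Set V} {x : V} {a : ℕ} (h : sdist G s x ≤ a) :
    ∃ w ∈ s, G.edist x w ≤ a := by
  have h2 : sdist G s x < ((a : ℕ∞) + 1) :=
    lt_of_le_of_lt h ((ENat.lt_add_one_iff (ENat.coe_ne_top a)).mpr le_rfl)
  rw [sdist, iInf_lt_iff] at h2
  obtain ⟨w, hw⟩ := h2
  rw [iInf_lt_iff] at hw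
  obtain ⟨hmem, hlt⟩ := hw
  exact ⟨w, hmem, (ENat.lt_add_one_iff (ENat.coe_ne_top a)).mp hlt⟩

lemma sdist_triangle (s : Set V) (x y : V) :
    sdist G s x ≤ G.edist x y + sdist G s y := by
  rcases eq_or_ne (sdist G s y) ⊤ with htop | hne
  · simp [htop]
  · lift sdist G s y to ℕ using hne with b hb
    obtain ⟨w, hw, hyw⟩ := sdist_exists (le_of_eq hb.symm)
    calc sdist G s x ≤ G.edist x w := sdist_le hw
      _ ≤ G.edist x y + G.edist y w := SimpleGraph.edist_triangle
      _ ≤ G.edist x y + b := by exact add_le_add_right hyw _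

lemma enat_cancel {a b k : ℕ∞} (hk : k ≠ ⊤) (h : a + k ≤ b + k) : a ≤ b :=
  (WithTop.add_le_add_iff_right hk).mp h

/-- main separation tool via distance to a reference set -/
lemma far_of_sdist (s : Set V) {x y : V} {a b c : ℕ} (hx : sdist G s x ≤ a)
    (hy : (b : ℕ∞) ≤ sdist G s y) (hc : a + c ≤ b) : (c : ℕ∞) ≤ G.edist x y := by
  obtain ⟨w, hw, hxw⟩ := sdist_exists hx
  have h1 : (b : ℕ∞) ≤ G.edist y w := le_trans hy (sdist_le hw)
  have h2 : G.edist y w ≤ G.edist y x + G.edist x w := SimpleGraph.edist_triangle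
  have h3 : (c : ℕ∞) + a ≤ G.edist y x + a := by
    calc (c : ℕ∞) + a = ((c + a : ℕ) : ℕ∞) := by push_cast; ring
      _ ≤ (b : ℕ∞) := by exact_mod_cast (by omega : c + a ≤ b)
      _ ≤ G.edist y x + G.edist x w := le_trans h1 h2
      _ ≤ G.edist y x + a := add_le_add_right hxw _
  have := enat_cancel (ENat.coe_ne_top a) h3
  rwa [SimpleGraph.edist_comm] at this

/-- separation of sets close to far-apart sets -/
lemma far_of_close {x y x' y' : V} {r r' c k : ℕ} (hxx' : G.edist x x' ≤ r)
    (hyy' : G.edist y y' ≤ r') (hk : (k : ℕ∞) ≤ G.edist x' y') (hc : c + r + r' ≤ k) :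
    (c : ℕ∞) ≤ G.edist x y := by
  have h1 : G.edist x' y' ≤ G.edist x' x + (G.edist x y + G.edist y y') := by
    calc G.edist x' y' ≤ G.edist x' x + G.edist x y' := SimpleGraph.edist_triangle
      _ ≤ G.edist x' x + (G.edist x y + G.edist y y') :=
        add_le_add_right SimpleGraph.edist_triangle _
  have h2 : (k : ℕ∞) ≤ G.edist x y + ((r + r' : ℕ) : ℕ∞) := by
    calc (k : ℕ∞) ≤ G.edist x' x + (G.edist x y + G.edist y y') := le_trans hk h1
      _ ≤ (r : ℕ∞) + (G.edist x y + (r' : ℕ∞)) := by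
          refine add_le_add ?_ (add_le_add_right hyy' _)
          rwa [SimpleGraph.edist_comm]
      _ = G.edist x y + ((r + r' : ℕ) : ℕ∞) := by push_cast; ring
  have h3 : (c : ℕ∞) + ((r + r' : ℕ) : ℕ∞) ≤ G.edist x y + ((r + r' : ℕ) : ℕ∞) := by
    calc (c : ℕ∞) + ((r + r' : ℕ) : ℕ∞) = ((c + r + r' : ℕ) : ℕ∞) := by push_cast; ring
      _ ≤ (k : ℕ∞) := by exact_mod_cast hc
      _ ≤ _ := h2
  exact enat_cancel (ENat.coe_ne_top (r + r')) h3

lemma edist_getVert_left {u v : V} (p : G.Walk u v) (s : ℕ) :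
    G.edist u (p.getVert s) ≤ (s : ℕ∞) := by
  induction p generalizing s with
  | nil => simp [SimpleGraph.Walk.getVert]
  | cons h q ih =>
    cases s with
    | zero => simp [SimpleGraph.Walk.getVert]
    | succ s =>
      have h1 : G.edist _ _ ≤ _ := ih s
      calc G.edist _ ((SimpleGraph.Walk.cons h q).getVert (s + 1))
          ≤ G.edist _ _ + G.edist _ (q.getVert s) := SimpleGraph.edist_triangle
        _ ≤ 1 + (s : ℕ∞) := by
            refine add_le_add ?_ h1
            have := SimpleGraph.edist_le (SimpleGraph.Walk.cons h SimpleGraph.Walk.nil)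
            simpa using this
        _ = ((s + 1 : ℕ) : ℕ∞) := by push_cast; ring

lemma edist_getVert_right {u v : V} (p : G.Walk u v) (s : ℕ) :
    G.edist (p.getVert s) v ≤ ((p.length - s : ℕ) : ℕ∞) := by
  induction p generalizing s with
  | nil => simp [SimpleGraph.Walk.getVert]
  | cons h q ih =>
    cases s with
    | zero =>
      simpa [SimpleGraph.Walk.getVert] using
        SimpleGraph.edist_le (SimpleGraph.Walk.cons h q)
    | succ s =>
      have h1 := ih s
      simpa [SimpleGraph.Walk.getVert, Nat.succ_sub_succ] using h1

lemma edist_getVert_succ {u v : V} (p : G.Walk u v) (j : ℕ) :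
    G.edist (p.getVert j) (p.getVert (j + 1)) ≤ 1 := by
  rcases lt_or_ge j p.length with hlt | hge
  · have hadj := p.adj_getVert_succ hlt
    have := SimpleGraph.edist_le (SimpleGraph.Walk.cons hadj SimpleGraph.Walk.nil)
    simpa using this
  · rw [p.getVert_of_length_le hge, p.getVert_of_length_le (by omega)]
    simp

lemma getVert_mem_support {u v : V} (p : G.Walk u v) (j : ℕ) :
    p.getVert j ∈ p.support := by
  induction p generalizing j with
  | nil => simp [SimpleGraph.Walk.getVert]
  | cons h q ih =>
    cases j with
    | zero => simp [SimpleGraph.Walk.getVert]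
    | succ j =>
      simp only [SimpleGraph.Walk.support_cons, List.mem_cons]
      exact Or.inr (ih j)

lemma induce_singleton_connected (G : SimpleGraph V) (x : V) :
    (G.induce {x}).Connected := by
  rw [SimpleGraph.connected_iff]
  refine ⟨fun a b => ?_, ⟨⟨x, rfl⟩⟩⟩
  have : a = b := Subtype.ext (by
    have ha := a.2; have hb := b.2
    simp only [Set.mem_singleton_iff] at ha hb
    rw [ha, hb])
  rw [this]

lemma induce_insert_adj {s : Set V} {x y : V} (hs : (G.induce s).Connected)
    (hx : x ∈ s) (hadj : G.Adj x y) : (G.induce (insert y s)).Connected := by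
  have hpair : (G.induce {x, y}).Connected := G.induce_pair_connected_of_adj hadj
  have h := SimpleGraph.induce_union_connected hpair.preconnected hs.preconnected ⟨x, by simp [hx]⟩
  have hset : ({x, y} : Set V) ∪ s = insert y s := by
    ext z
    simp only [Set.mem_union, Set.mem_insert_iff, Set.mem_singleton_iff]
    constructor
    · rintro ((rfl | rfl) | hz) <;> tauto
    · rintro (rfl | hz) <;> tauto
  rwa [hset] at h

lemma segment_image_succ {u v : V} (p : G.Walk u v) (a k : ℕ) :
    p.getVert '' Set.Icc a (a + (k + 1)) =
      insert (p.getVert (a + (k + 1))) (p.getVert '' Set.Icc a (a + k)) := by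
  ext x
  simp only [Set.mem_image, Set.mem_Icc, Set.mem_insert_iff]
  constructor
  · rintro ⟨j, ⟨hja, hjb⟩, rfl⟩
    rcases eq_or_ne j (a + (k + 1)) with rfl | hne
    · exact Or.inl rfl
    · exact Or.inr ⟨j, ⟨hja, by omega⟩, rfl⟩
  · rintro (rfl | ⟨j, ⟨hja, hjb⟩, rfl⟩)
    · exact ⟨a + (k + 1), ⟨by omega, le_refl _⟩, rfl⟩
    · exact ⟨j, ⟨hja, by omega⟩, rfl⟩

lemma segment_connected {u v : V} (p : G.Walk u v) (a b : ℕ) (hab : a ≤ b) :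
    (G.induce (p.getVert '' Set.Icc a b)).Connected := by
  obtain ⟨k, rfl⟩ : ∃ k, b = a + k := ⟨b - a, by omega⟩
  clear hab
  induction k with
  | zero =>
    have : p.getVert '' Set.Icc a (a + 0) = {p.getVert a} := by
      simp
    rw [this]
    exact induce_singleton_connected G _
  | succ k ih =>
    rw [segment_image_succ]
    have hmem : p.getVert (a + k) ∈ p.getVert '' Set.Icc a (a + k) :=
      ⟨a + k, by simp, rfl⟩
    rcases lt_or_ge (a + k) p.length with hlt | hge
    · exact induce_insert_adj ih hmem (by
        have := p.adj_getVert_succ hlt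
        simpa [show a + (k+1) = (a+k)+1 by omega] using this)
    · have : p.getVert (a + (k + 1)) = p.getVert (a + k) := by
        rw [p.getVert_of_length_le hge, p.getVert_of_length_le (by omega)]
      rw [this, Set.insert_eq_self.mpr hmem]
      exact ih



lemma ugraph_adj_none {t : ℕ} (i : Fin t) : (Ugraph t).Adj none (some i) := by
  rw [Ugraph, SimpleGraph.fromRel_adj]
  exact ⟨by simp, Or.inl (Or.inl rfl)⟩

lemma ugraph_adj_succ {t : ℕ} (j : Fin t) (h : (j : ℕ) + 1 < t) :
    (Ugraph t).Adj (some j) (some ⟨(j : ℕ) + 1, h⟩) := by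
  rw [Ugraph, SimpleGraph.fromRel_adj]
  refine ⟨?_, Or.inl (Or.inr ⟨j, ⟨(j : ℕ) + 1, h⟩, rfl, rfl, rfl⟩)⟩
  simp only [ne_eq, Option.some.injEq, Fin.ext_iff]
  omega

variable {V : Type*} {G : SimpleGraph V}

lemma coe_add_le {a b c : ℕ} (h : a + b ≤ c) : (a : ℕ∞) + (b : ℕ∞) ≤ (c : ℕ∞) := by
  exact_mod_cast h

lemma key_construction {t : ℕ} {K m : ℕ} (M : FatMinorModel G (Ugraph t) K)
    (hm3 : 3 ≤ m) (hm4 : 4 * m ≤ K) (i : Fin t) :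
    ∃ CS Q0S Q1S LS : Set V,
      (G.induce CS).Connected ∧ (G.induce Q0S).Connected ∧ (G.induce Q1S).Connected ∧
      (G.induce LS).Connected ∧
      (∃ w₀ ∈ M.B none, w₀ ∈ LS) ∧
      (LS ∩ Q0S).Nonempty ∧ (CS ∩ Q0S).Nonempty ∧ (CS ∩ Q1S).Nonempty ∧
      (∃ w₁ ∈ M.B (some i), w₁ ∈ Q1S) ∧
      (∀ x ∈ LS, sdist G (M.B none) x ≤ (m : ℕ∞)) ∧
      (∀ x ∈ Q0S, sdist G (M.B none) x ≤ ((2 * m : ℕ) : ℕ∞)) ∧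
      (∀ x ∈ CS, ((2 * m : ℕ) : ℕ∞) ≤ sdist G (M.B none) x) ∧
      (∀ x ∈ CS, (m : ℕ∞) ≤ sdist G (M.B (some i)) x) ∧
      (CS ⊆ M.P none (some i)) ∧
      (∀ y ∈ Q0S, ∃ x' ∈ M.P none (some i), G.edist y x' ≤ (m : ℕ∞)) ∧
      (∀ y ∈ Q1S, ∃ x' ∈ M.P none (some i), G.edist y x' ≤ (m : ℕ∞)) ∧
      (∀ y ∈ Q1S, ((3 * m : ℕ) : ℕ∞) ≤ sdist G (M.B none) y) := by
  classical
  obtain ⟨x0, hx0B, hx0P⟩ := M.meets (ugraph_adj_none i)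
  have hx1' := M.meets (ugraph_adj_none i).symm
  rw [M.Psymm] at hx1'
  obtain ⟨x1, hx1B, hx1P⟩ := hx1'
  set S := M.P none (some i) with hSdef
  set Bn := M.B none with hBndef
  set Bi := M.B (some i) with hBidef
  have hScon := M.Pconnected (ugraph_adj_none i)
  obtain ⟨W0⟩ := hScon.preconnected ⟨x0, hx0P⟩ ⟨x1, hx1P⟩
  let ι : G.induce S →g G := ⟨Subtype.val, fun {a b} h => h⟩
  let Wk : G.Walk x0 x1 := W0.map ι
  have hvert : ∀ j, Wk.getVert j ∈ S := by
    intro j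
    have hsup := getVert_mem_support Wk j
    rw [show Wk = W0.map ι from rfl, SimpleGraph.Walk.support_map] at hsup
    obtain ⟨a, _, ha⟩ := List.mem_map.mp hsup
    rw [← ha]; exact a.2
  set F : V → ℕ∞ := fun x => sdist G Bn x with hFdef
  set Gd : V → ℕ∞ := fun x => sdist G Bi x with hGdef
  have hF0 : F (Wk.getVert 0) = 0 := by
    rw [Wk.getVert_zero]
    refine le_antisymm ?_ zero_le
    have := sdist_le (G := G) (x := x0) hx0B
    simpa using this
  have hFbig : ∀ j, Wk.length ≤ j → (K : ℕ∞) ≤ F (Wk.getVert j) := by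
    intro j hj
    rw [Wk.getVert_of_length_le hj]
    exact le_sdist fun w hw =>
      M.far_BB (Option.some_ne_none i) x1 hx1B w hw
  have hstep : ∀ j, G.edist (Wk.getVert j) (Wk.getVert (j + 1)) ≤ 1 :=
    fun j => edist_getVert_succ Wk j
  have hlipF : ∀ j, F (Wk.getVert (j + 1)) ≤ F (Wk.getVert j) + 1 := by
    intro j
    calc F (Wk.getVert (j + 1))
        ≤ G.edist (Wk.getVert (j + 1)) (Wk.getVert j) + F (Wk.getVert j) := by
          simpa using sdist_triangle (G := G) Bn (Wk.getVert (j + 1)) (Wk.getVert j)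
      _ ≤ 1 + F (Wk.getVert j) := by
          refine add_le_add_left ?_ _
          rw [SimpleGraph.edist_comm]; exact hstep j
      _ = F (Wk.getVert j) + 1 := add_comm _ _
  -- j2 : last index with F ≤ 2m
  set P2 : ℕ → Prop := fun j => F (Wk.getVert j) ≤ ((2 * m : ℕ) : ℕ∞) with hP2def
  have hP20 : P2 0 := by rw [hP2def]; simp only; rw [hF0]; exact zero_le
  set j2 := Nat.findGreatest P2 Wk.length with hj2def
  have hj2P : P2 j2 := Nat.findGreatest_spec (Nat.zero_le _) hP20
  have hgt : ∀ j, j2 < j → ((2 * m + 1 : ℕ) : ℕ∞) ≤ F (Wk.getVert j) := by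
    intro j hj
    rcases le_or_gt j Wk.length with hle | hlt
    · have hnot : ¬ P2 j := Nat.findGreatest_is_greatest hj hle
      have hltF : ((2 * m : ℕ) : ℕ∞) < F (Wk.getVert j) := lt_of_not_ge hnot
      have := (ENat.add_one_le_iff (ENat.coe_ne_top (2 * m))).mpr hltF
      calc ((2 * m + 1 : ℕ) : ℕ∞) = ((2 * m : ℕ) : ℕ∞) + 1 := by push_cast; ring
        _ ≤ F (Wk.getVert j) := this
    · refine le_trans ?_ (hFbig j hlt.le)
      exact_mod_cast (by omega : 2 * m + 1 ≤ K)
  have hj2n : F (Wk.getVert j2) = ((2 * m : ℕ) : ℕ∞) := by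
    refine le_antisymm hj2P ?_
    have h1 := hgt (j2 + 1) (Nat.lt_succ_self _)
    have h2 := hlipF j2
    refine enat_cancel (k := (1 : ℕ∞)) (by simp) ?_
    calc ((2 * m : ℕ) : ℕ∞) + (1 : ℕ∞) = ((2 * m + 1 : ℕ) : ℕ∞) := by push_cast; ring
      _ ≤ F (Wk.getVert (j2 + 1)) := h1
      _ ≤ F (Wk.getVert j2) + 1 := h2
  have hGj2 : ((m + 1 : ℕ) : ℕ∞) ≤ Gd (Wk.getVert j2) := by
    refine le_sdist fun w' hw' => ?_
    obtain ⟨w, hw, hxw⟩ := sdist_exists (le_of_eq hj2n)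
    have hK' : (K : ℕ∞) ≤ G.edist w w' :=
      M.far_BB (by simp : (none : Option (Fin t)) ≠ some i) w hw w' hw'
    refine enat_cancel (k := ((2 * m : ℕ) : ℕ∞)) (ENat.coe_ne_top _) ?_
    calc ((m + 1 : ℕ) : ℕ∞) + ((2 * m : ℕ) : ℕ∞) ≤ (K : ℕ∞) := coe_add_le (by omega)
      _ ≤ G.edist w w' := hK'
      _ ≤ G.edist w (Wk.getVert j2) + G.edist (Wk.getVert j2) w' :=
          SimpleGraph.edist_triangle
      _ ≤ ((2 * m : ℕ) : ℕ∞) + G.edist (Wk.getVert j2) w' := by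
          refine add_le_add_left ?_ _
          rw [SimpleGraph.edist_comm]; exact hxw
      _ = G.edist (Wk.getVert j2) w' + ((2 * m : ℕ) : ℕ∞) := add_comm _ _
  -- z : first index ≥ j2 with Gd ≤ m
  have hex : ∃ d, Gd (Wk.getVert (j2 + d)) ≤ (m : ℕ∞) := by
    refine ⟨Wk.length + 1, ?_⟩
    rw [Wk.getVert_of_length_le (by omega)]
    have h0 : Gd x1 ≤ G.edist x1 x1 := sdist_le hx1B
    simp only [SimpleGraph.edist_self] at h0
    exact le_trans h0 zero_le
  set d0 := Nat.find hex with hd0def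
  set z := j2 + d0 with hzdef
  have hGz : Gd (Wk.getVert z) ≤ (m : ℕ∞) := Nat.find_spec hex
  have hzmin : ∀ j, j2 ≤ j → j < z → ((m + 1 : ℕ) : ℕ∞) ≤ Gd (Wk.getVert j) := by
    intro j hj1 hj2'
    have hd : j - j2 < d0 := by omega
    have hnot := Nat.find_min hex hd
    rw [show j2 + (j - j2) = j by omega] at hnot
    have hltG : (m : ℕ∞) < Gd (Wk.getVert j) := lt_of_not_ge hnot
    have := (ENat.add_one_le_iff (ENat.coe_ne_top m)).mpr hltG
    calc ((m + 1 : ℕ) : ℕ∞) = (m : ℕ∞) + 1 := by push_cast; ring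
      _ ≤ Gd (Wk.getVert j) := this
  have hzgt : j2 < z := by
    rcases Nat.eq_zero_or_pos d0 with h0 | h0
    · exfalso
      rw [hzdef, h0, Nat.add_zero] at hGz
      have := le_trans hGj2 hGz
      have : (m + 1 : ℕ) ≤ m := by exact_mod_cast this
      omega
    · omega
  have hlipG : ∀ j, Gd (Wk.getVert j) ≤ Gd (Wk.getVert (j + 1)) + 1 := by
    intro j
    calc Gd (Wk.getVert j)
        ≤ G.edist (Wk.getVert j) (Wk.getVert (j + 1)) + Gd (Wk.getVert (j + 1)) :=
          sdist_triangle _ _ _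
      _ ≤ 1 + Gd (Wk.getVert (j + 1)) := add_le_add_left (hstep j) _
      _ = Gd (Wk.getVert (j + 1)) + 1 := add_comm _ _
  have hGzge : (m : ℕ∞) ≤ Gd (Wk.getVert z) := by
    have h1 := hzmin (z - 1) (by omega) (by omega)
    have h2 := hlipG (z - 1)
    rw [show z - 1 + 1 = z by omega] at h2
    refine enat_cancel (k := (1 : ℕ∞)) (by simp) ?_
    calc (m : ℕ∞) + (1 : ℕ∞) = ((m + 1 : ℕ) : ℕ∞) := by push_cast; ring
      _ ≤ Gd (Wk.getVert (z - 1)) := h1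
      _ ≤ Gd (Wk.getVert z) + 1 := h2
  -- the two geodesics
  obtain ⟨w0, hw0, hw0d⟩ := sdist_exists (le_of_eq hj2n)
  have hw0eq : G.edist (Wk.getVert j2) w0 = ((2 * m : ℕ) : ℕ∞) := by
    refine le_antisymm hw0d ?_
    rw [← hj2n]; exact sdist_le hw0
  obtain ⟨γ, hγlen⟩ := SimpleGraph.exists_walk_of_edist_eq_coe hw0eq
  obtain ⟨w1, hw1, hw1d⟩ := sdist_exists (a := m) (by exact_mod_cast hGz)
  have hne1 : G.edist (Wk.getVert z) w1 ≠ ⊤ := by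
    intro htop; rw [htop] at hw1d; exact (by simp : ¬ (⊤ : ℕ∞) ≤ (m:ℕ∞)) hw1d
  obtain ⟨ℓ, hℓeq⟩ : ∃ ℓ : ℕ, G.edist (Wk.getVert z) w1 = (ℓ : ℕ∞) := by
    lift G.edist (Wk.getVert z) w1 to ℕ using hne1 with ℓ hℓ
    exact ⟨ℓ, rfl⟩
  have hℓm : ℓ ≤ m := by rw [hℓeq] at hw1d; exact_mod_cast hw1d
  obtain ⟨δ, hδlen⟩ := SimpleGraph.exists_walk_of_edist_eq_coe hℓeq
  -- define the four sets
  refine ⟨Wk.getVert '' Set.Icc j2 z, γ.getVert '' Set.Icc 0 m, δ.getVert '' Set.Icc 0 m,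
    γ.getVert '' Set.Icc m (2 * m), ?_, ?_, ?_, ?_, ?_, ?_, ?_, ?_, ?_, ?_, ?_, ?_, ?_, ?_, ?_,
    ?_, ?_⟩
  · exact segment_connected Wk j2 z hzgt.le
  · exact segment_connected γ 0 m (Nat.zero_le _)
  · exact segment_connected δ 0 m (Nat.zero_le _)
  · exact segment_connected γ m (2 * m) (by omega)
  · -- w0 ∈ Bn and w0 ∈ L
    refine ⟨w0, hw0, ⟨2 * m, ⟨by omega, le_refl _⟩, ?_⟩⟩
    rw [← hγlen]; exact γ.getVert_length
  · -- L ∩ Q0 nonempty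
    exact ⟨γ.getVert m, ⟨m, ⟨le_refl _, by omega⟩, rfl⟩, ⟨m, ⟨Nat.zero_le _, le_refl _⟩, rfl⟩⟩
  · -- C ∩ Q0 nonempty
    refine ⟨Wk.getVert j2, ⟨j2, ⟨le_refl _, hzgt.le⟩, rfl⟩, ⟨0, ⟨le_refl _, Nat.zero_le _⟩, ?_⟩⟩
    exact γ.getVert_zero
  · -- C ∩ Q1 nonempty
    refine ⟨Wk.getVert z, ⟨z, ⟨hzgt.le, le_refl _⟩, rfl⟩, ⟨0, ⟨le_refl _, Nat.zero_le _⟩, ?_⟩⟩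
    exact δ.getVert_zero
  · -- w1 ∈ Bi ∩ Q1
    refine ⟨w1, hw1, ⟨m, ⟨Nat.zero_le _, le_refl _⟩, ?_⟩⟩
    exact δ.getVert_of_length_le (by omega : δ.length ≤ m)
  · -- L : F ≤ m
    rintro x ⟨s, ⟨hs1, hs2⟩, rfl⟩
    have h1 : F (γ.getVert s) ≤ G.edist (γ.getVert s) w0 := sdist_le hw0
    have h2 := edist_getVert_right γ s
    rw [hγlen] at h2
    refine le_trans h1 (le_trans h2 ?_)
    exact_mod_cast (by omega : 2 * m - s ≤ m)
  · -- Q0 : F ≤ 2m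
    rintro x ⟨s, ⟨hs1, hs2⟩, rfl⟩
    have h1 : F (γ.getVert s) ≤ G.edist (γ.getVert s) w0 := sdist_le hw0
    have h2 := edist_getVert_right γ s
    rw [hγlen] at h2
    refine le_trans h1 (le_trans h2 ?_)
    exact_mod_cast (by omega : 2 * m - s ≤ 2 * m)
  · -- C : 2m ≤ F
    rintro x ⟨j, ⟨hj1, hj2'⟩, rfl⟩
    rcases eq_or_lt_of_le hj1 with rfl | hlt
    · exact le_of_eq hj2n.symm
    · refine le_trans ?_ (hgt j hlt)
      exact_mod_cast (by omega : 2 * m ≤ 2 * m + 1)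
  · -- C : m ≤ Gd
    rintro x ⟨j, ⟨hj1, hj2'⟩, rfl⟩
    rcases eq_or_lt_of_le hj2' with rfl | hlt
    · exact hGzge
    · refine le_trans ?_ (hzmin j hj1 hlt)
      exact_mod_cast (by omega : m ≤ m + 1)
  · -- C ⊆ S
    rintro x ⟨j, _, rfl⟩
    exact hvert j
  · -- Q0 certificate
    rintro y ⟨s, ⟨hs1, hs2⟩, rfl⟩
    refine ⟨Wk.getVert j2, hvert j2, ?_⟩
    have := edist_getVert_left γ s
    rw [SimpleGraph.edist_comm]
    exact le_trans this (by exact_mod_cast hs2)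
  · -- Q1 certificate
    rintro y ⟨s, ⟨hs1, hs2⟩, rfl⟩
    refine ⟨Wk.getVert z, hvert z, ?_⟩
    have := edist_getVert_left δ s
    rw [SimpleGraph.edist_comm]
    exact le_trans this (by exact_mod_cast hs2)
  · -- Q1 : 3m ≤ F
    rintro y ⟨s, ⟨hs1, hs2⟩, rfl⟩
    have hyw1 : G.edist (δ.getVert s) w1 ≤ (m : ℕ∞) := by
      have h2 := edist_getVert_right δ s
      rw [hδlen] at h2
      exact le_trans h2 (by exact_mod_cast (by omega : ℓ - s ≤ m))
    refine le_sdist fun w hw => ?_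
    have hK' : (K : ℕ∞) ≤ G.edist w w1 :=
      M.far_BB (by simp : (none : Option (Fin t)) ≠ some i) w hw w1 hw1
    refine enat_cancel (k := (m : ℕ∞)) (ENat.coe_ne_top m) ?_
    calc ((3 * m : ℕ) : ℕ∞) + (m : ℕ∞) ≤ (K : ℕ∞) := coe_add_le (by omega)
      _ ≤ G.edist w w1 := hK'
      _ ≤ G.edist w (δ.getVert s) + G.edist (δ.getVert s) w1 := SimpleGraph.edist_triangle
      _ ≤ G.edist w (δ.getVert s) + (m : ℕ∞) := add_le_add_right hyw1 _
      _ = G.edist (δ.getVert s) w + (m : ℕ∞) := by rw [SimpleGraph.edist_comm]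

end FatAux

/-- For every `t ≥ 1`, if a graph `G` contains a `K`-fat minor model of
`U_t` for some `K ≥ 12`, then `G` contains a `⌊K/4⌋`-fat minor model of `K_{2,t}`.
Consequently, a `K_{2,t}`-asymptotic minor-free graph class is `U_t`-asymptotic
minor-free. -/
theorem fatMinor_K2t_of_fatMinor_Ugraph (t : ℕ) (ht : 1 ≤ t)
    (G : SimpleGraph V) (K : ℕ) (hK : 12 ≤ K)
    (h : Nonempty (FatMinorModel G (Ugraph t) K)) :
    Nonempty (FatMinorModel G (completeBipartiteGraph (Fin 2) (Fin t)) (K / 4)) := by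
  classical
  obtain ⟨M⟩ := h
  set m := K / 4 with hmdef
  have hm3 : 3 ≤ m := by omega
  have hm4 : 4 * m ≤ K := by omega
  choose CS Q0S Q1S LS hCcon hQ0con hQ1con hLcon hw0ex hLQ0 hCQ0 hCQ1 hw1ex hLF hQ0F hCF hCG
    hCsub hQ0cert hQ1cert hQ1F using fun i => FatAux.key_construction M hm3 hm4 i
  set A0 : Set V := M.B none ∪ ⋃ i, LS i with hA0def
  set EP : Fin t → Set V :=
    fun j => ⋃ (hj : (j : ℕ) + 1 < t), M.P (some j) (some ⟨(j : ℕ) + 1, hj⟩) with hEPdef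
  set A1 : Set V := (⋃ j, M.B (some j)) ∪ ⋃ j, EP j with hA1def
  -- basic distance facts for the two hub sets
  have hA0F : ∀ x ∈ A0, FatAux.sdist G (M.B none) x ≤ (m : ℕ∞) := by
    rintro x (hxB | hxL)
    · have h1 := FatAux.sdist_le (G := G) (x := x) hxB
      rw [SimpleGraph.edist_self] at h1
      exact le_trans h1 zero_le
    · rw [Set.mem_iUnion] at hxL
      obtain ⟨i, hxi⟩ := hxL
      exact hLF i x hxi
  have hA1F : ∀ y ∈ A1, (K : ℕ∞) ≤ FatAux.sdist G (M.B none) y := by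
    rintro y (hyB | hyE)
    · rw [Set.mem_iUnion] at hyB
      obtain ⟨j, hyj⟩ := hyB
      refine FatAux.le_sdist fun w hw => ?_
      have h1 := M.far_BB (show (none : Option (Fin t)) ≠ some j by simp) w hw y hyj
      rwa [SimpleGraph.edist_comm] at h1
    · rw [Set.mem_iUnion] at hyE
      obtain ⟨j, hyj⟩ := hyE
      rw [hEPdef, Set.mem_iUnion] at hyj
      obtain ⟨hlt, hyP⟩ := hyj
      refine FatAux.le_sdist fun w hw => ?_
      have hadj2 := FatAux.ugraph_adj_succ j hlt
      have h1 := M.far_BP hadj2 (show (none : Option (Fin t)) ≠ some j by simp)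
        (by simp) w hw y hyP
      rwa [SimpleGraph.edist_comm] at h1
  -- sym2 disjointness facts
  have hsym1 : ∀ (j : Fin t) (hlt : (j : ℕ) + 1 < t) (i : Fin t),
      s((some j : Option (Fin t)), some ⟨(j : ℕ) + 1, hlt⟩) ≠ s(none, some i) := by
    intro j hlt i hcontr
    rcases Sym2.eq_iff.mp hcontr with ⟨h1, _⟩ | ⟨_, h2⟩
    · exact Option.some_ne_none _ h1
    · exact Option.some_ne_none _ h2
  have hsym2 : ∀ (i j : Fin t), i ≠ j →
      s((none : Option (Fin t)), some i) ≠ s(none, some j) := by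
    intro i j hij hcontr
    rcases Sym2.eq_iff.mp hcontr with ⟨_, h2⟩ | ⟨h1, _⟩
    · exact hij (by simpa using h2)
    · exact Option.some_ne_none _ h1.symm
  -- core separation lemmas
  have dA0A1 : ∀ x ∈ A0, ∀ y ∈ A1, (m : ℕ∞) ≤ G.edist x y := by
    intro x hx y hy
    exact FatAux.far_of_sdist (M.B none) (a := m) (b := K) (hA0F x hx) (hA1F y hy) (by omega)
  have dA0C : ∀ (i : Fin t), ∀ x ∈ A0, ∀ y ∈ CS i, (m : ℕ∞) ≤ G.edist x y := by
    intro i x hx y hy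
    exact FatAux.far_of_sdist (M.B none) (a := m) (b := 2 * m) (hA0F x hx) (hCF i y hy)
      (by omega)
  have dA1C : ∀ (i : Fin t), ∀ x ∈ A1, ∀ y ∈ CS i, (m : ℕ∞) ≤ G.edist x y := by
    intro i x hx y hy
    rcases hx with hxB | hxE
    · rw [Set.mem_iUnion] at hxB
      obtain ⟨j, hxj⟩ := hxB
      rcases eq_or_ne j i with rfl | hne
      · have h1 : (m : ℕ∞) ≤ FatAux.sdist G (M.B (some j)) y := hCG j y hy
        have h2 := FatAux.sdist_le (G := G) (x := y) hxj
        rw [SimpleGraph.edist_comm]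
        exact le_trans h1 h2
      · have hK' := M.far_BP (FatAux.ugraph_adj_none i)
          (show (some j : Option (Fin t)) ≠ none by simp)
          (show (some j : Option (Fin t)) ≠ some i by simpa using hne) x hxj y (hCsub i hy)
        exact le_trans (by exact_mod_cast (by omega : m ≤ K)) hK'
    · rw [Set.mem_iUnion] at hxE
      obtain ⟨j, hxj⟩ := hxE
      rw [hEPdef, Set.mem_iUnion] at hxj
      obtain ⟨hlt, hxP⟩ := hxj
      have hK' := M.far_PP (FatAux.ugraph_adj_succ j hlt) (FatAux.ugraph_adj_none i)
        (hsym1 j hlt i) x hxP y (hCsub i hy)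
      exact le_trans (by exact_mod_cast (by omega : m ≤ K)) hK'
  have dCC : ∀ (i j : Fin t), i ≠ j → ∀ x ∈ CS i, ∀ y ∈ CS j, (m : ℕ∞) ≤ G.edist x y := by
    intro i j hij x hx y hy
    have hK' := M.far_PP (FatAux.ugraph_adj_none i) (FatAux.ugraph_adj_none j)
      (hsym2 i j hij) x (hCsub i hx) y (hCsub j hy)
    exact le_trans (by exact_mod_cast (by omega : m ≤ K)) hK'
  have dA1Q0 : ∀ (i : Fin t), ∀ x ∈ A1, ∀ y ∈ Q0S i, (m : ℕ∞) ≤ G.edist x y := by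
    intro i x hx y hy
    have h1 := FatAux.far_of_sdist (M.B none) (a := 2 * m) (b := K) (c := m) (hQ0F i y hy)
      (hA1F x hx) (by omega)
    rwa [SimpleGraph.edist_comm] at h1
  have dA0Q1 : ∀ (i : Fin t), ∀ x ∈ A0, ∀ y ∈ Q1S i, (m : ℕ∞) ≤ G.edist x y := by
    intro i x hx y hy
    exact FatAux.far_of_sdist (M.B none) (a := m) (b := 3 * m) (hA0F x hx) (hQ1F i y hy)
      (by omega)
  have dQ0Q1 : ∀ (i : Fin t), ∀ x ∈ Q0S i, ∀ y ∈ Q1S i, (m : ℕ∞) ≤ G.edist x y := by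
    intro i x hx y hy
    exact FatAux.far_of_sdist (M.B none) (a := 2 * m) (b := 3 * m) (hQ0F i x hx)
      (hQ1F i y hy) (by omega)
  have dCQ : ∀ (i j : Fin t), j ≠ i → ∀ x ∈ CS j, ∀ y,
      (∃ x' ∈ M.P none (some i), G.edist y x' ≤ (m : ℕ∞)) → (m : ℕ∞) ≤ G.edist x y := by
    intro i j hji x hx y hcert
    obtain ⟨x', hx'S, hyx'⟩ := hcert
    have hK' := M.far_PP (FatAux.ugraph_adj_none j) (FatAux.ugraph_adj_none i)
      (hsym2 j i hji) x (hCsub j hx) x' hx'S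
    exact FatAux.far_of_close (r := 0) (r' := m) (c := m) (k := K)
      (by simp) hyx' hK' (by omega)
  have dQQ : ∀ (i j : Fin t), i ≠ j → ∀ x y,
      (∃ x' ∈ M.P none (some i), G.edist x x' ≤ (m : ℕ∞)) →
      (∃ y' ∈ M.P none (some j), G.edist y y' ≤ (m : ℕ∞)) → (m : ℕ∞) ≤ G.edist x y := by
    intro i j hij x y hc1 hc2
    obtain ⟨x', hx'S, hxx'⟩ := hc1
    obtain ⟨y', hy'S, hyy'⟩ := hc2
    have hK' := M.far_PP (FatAux.ugraph_adj_none i) (FatAux.ugraph_adj_none j)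
      (hsym2 i j hij) x' hx'S y' hy'S
    exact FatAux.far_of_close (r := m) (r' := m) (c := m) (k := K) hxx' hyy' hK' (by omega)
  -- certificates for the bridge paths, uniform in the Fin 2 index
  have hQcert : ∀ (a : Fin 2) (i : Fin t), ∀ y ∈ ![Q0S i, Q1S i] a,
      ∃ x' ∈ M.P none (some i), G.edist y x' ≤ (m : ℕ∞) := by
    intro a i y hy
    fin_cases a
    · simp only [Matrix.cons_val_zero] at hy
      exact hQ0cert i y hy
    · simp only [Matrix.cons_val_one, Matrix.head_cons] at hy
      exact hQ1cert i y hy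
  have hQQ : ∀ (a : Fin 2) (i : Fin t) (a' : Fin 2) (i' : Fin t), ¬(a = a' ∧ i = i') →
      ∀ x ∈ ![Q0S i, Q1S i] a, ∀ y ∈ ![Q0S i', Q1S i'] a', (m : ℕ∞) ≤ G.edist x y := by
    intro a i a' i' hne x hx y hy
    rcases eq_or_ne i i' with rfl | hii
    · have haa : a ≠ a' := fun hc => hne ⟨hc, rfl⟩
      fin_cases a <;> fin_cases a'
      · exact absurd rfl haa
      · simp only [Matrix.cons_val_zero] at hx
        simp only [Matrix.cons_val_one, Matrix.head_cons] at hy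
        exact dQ0Q1 i x hx y hy
      · simp only [Matrix.cons_val_one, Matrix.head_cons] at hx
        simp only [Matrix.cons_val_zero] at hy
        rw [SimpleGraph.edist_comm]
        exact dQ0Q1 i y hy x hx
      · exact absurd rfl haa
    · exact dQQ i i' hii x y (hQcert a i x hx) (hQcert a' i' y hy)
  -- membership of the Fin 2 branch sets
  have hQBB : ∀ (a : Fin 2) (i : Fin t), ∀ x ∈ ![A0, A1] a, ∀ y ∈ ![Q0S i, Q1S i] a,
      True := fun _ _ _ _ _ _ => trivial
  -- connectivity of the two hub sets
  have hA0conn : (G.induce A0).Connected := by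
    obtain ⟨b0, hb0⟩ := M.Bnonempty none
    refine SimpleGraph.induce_connected_of_patches b0 (Or.inl hb0) ?_
    intro v hv
    rcases hv with hvB | hvL
    · refine ⟨M.B none, Set.subset_union_left, hb0, hvB, ?_⟩
      exact (M.Bconnected none).preconnected ⟨b0, hb0⟩ ⟨v, hvB⟩
    · rw [Set.mem_iUnion] at hvL
      obtain ⟨i, hvi⟩ := hvL
      obtain ⟨w0, hw0B, hw0L⟩ := hw0ex i
      have hconn := SimpleGraph.induce_union_connected (M.Bconnected none).preconnected (hLcon i).preconnected
        ⟨w0, hw0B, hw0L⟩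
      refine ⟨M.B none ∪ LS i, ?_, Or.inl hb0, Or.inr hvi, hconn.preconnected _ _⟩
      rintro x (hx | hx)
      · exact Or.inl hx
      · exact Or.inr (Set.mem_iUnion.mpr ⟨i, hx⟩)
  have hA1conn : (G.induce A1).Connected := by
    have h0t : 0 < t := ht
    obtain ⟨b1, hb1⟩ := M.Bnonempty (some ⟨0, h0t⟩)
    have hb1A : b1 ∈ A1 := Or.inl (Set.mem_iUnion.mpr ⟨⟨0, h0t⟩, hb1⟩)
    have chain : ∀ k, ∀ hk : k < t, ∃ s', s' ⊆ A1 ∧ (G.induce s').Connected ∧ b1 ∈ s' ∧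
        M.B (some ⟨k, hk⟩) ⊆ s' := by
      intro k
      induction k with
      | zero =>
        intro hk
        refine ⟨M.B (some ⟨0, hk⟩), ?_, M.Bconnected _, hb1, fun x hx => hx⟩
        intro x hx
        exact Or.inl (Set.mem_iUnion.mpr ⟨⟨0, hk⟩, hx⟩)
      | succ k ih =>
        intro hk
        have hk' : k < t := by omega
        obtain ⟨s', hs'sub, hs'conn, hb1s', hBks'⟩ := ih hk'
        have hadj : (Ugraph t).Adj (some ⟨k, hk'⟩) (some ⟨k + 1, hk⟩) :=
          FatAux.ugraph_adj_succ ⟨k, hk'⟩ hk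
        obtain ⟨y1, hy1B, hy1P⟩ := M.meets hadj
        have hmeets2 := M.meets hadj.symm
        rw [M.Psymm] at hmeets2
        obtain ⟨y2, hy2B, hy2P⟩ := hmeets2
        have hinner := SimpleGraph.induce_union_connected (M.Pconnected hadj).preconnected
          (M.Bconnected (some ⟨k + 1, hk⟩)).preconnected ⟨y2, hy2P, hy2B⟩
        have houter := SimpleGraph.induce_union_connected hs'conn.preconnected hinner.preconnected
          ⟨y1, hBks' hy1B, Or.inl hy1P⟩
        refine ⟨s' ∪ (M.P (some ⟨k, hk'⟩) (some ⟨k + 1, hk⟩) ∪ M.B (some ⟨k + 1, hk⟩)),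
          ?_, houter, Or.inl hb1s', fun x hx => Or.inr (Or.inr hx)⟩
        rintro x (hx | (hx | hx))
        · exact hs'sub hx
        · refine Or.inr (Set.mem_iUnion.mpr ⟨⟨k, hk'⟩, ?_⟩)
          rw [hEPdef]
          exact Set.mem_iUnion.mpr ⟨hk, hx⟩
        · exact Or.inl (Set.mem_iUnion.mpr ⟨⟨k + 1, hk⟩, hx⟩)
    refine SimpleGraph.induce_connected_of_patches b1 hb1A ?_
    intro v hv
    rcases hv with hvB | hvE
    · rw [Set.mem_iUnion] at hvB
      obtain ⟨j, hvj⟩ := hvB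
      obtain ⟨s', hsub, hconn, hb1s, hBsub⟩ := chain j.val j.isLt
      refine ⟨s', hsub, hb1s, hBsub (by simpa using hvj), hconn.preconnected _ _⟩
    · rw [Set.mem_iUnion] at hvE
      obtain ⟨j, hvj⟩ := hvE
      rw [hEPdef, Set.mem_iUnion] at hvj
      obtain ⟨hlt, hvP⟩ := hvj
      obtain ⟨s', hsub, hconn, hb1s, hBsub⟩ := chain j.val j.isLt
      have hadj : (Ugraph t).Adj (some j) (some ⟨(j : ℕ) + 1, hlt⟩) :=
        FatAux.ugraph_adj_succ j hlt
      obtain ⟨y1, hy1B, hy1P⟩ := M.meets hadj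
      have hy1s' : y1 ∈ s' := hBsub (by simpa using hy1B)
      have hconn2 := SimpleGraph.induce_union_connected hconn.preconnected (M.Pconnected hadj).preconnected
        ⟨y1, hy1s', hy1P⟩
      refine ⟨s' ∪ M.P (some j) (some ⟨(j : ℕ) + 1, hlt⟩), ?_, Or.inl hb1s, Or.inr hvP,
        hconn2.preconnected _ _⟩
      rintro x (hx | hx)
      · exact hsub hx
      · refine Or.inr (Set.mem_iUnion.mpr ⟨j, ?_⟩)
        rw [hEPdef]
        exact Set.mem_iUnion.mpr ⟨hlt, hx⟩
  -- assemble the model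
  refine ⟨⟨fun w => Sum.rec (fun a => ![A0, A1] a) (fun i => CS i) w,
    fun u v => match u, v with
      | Sum.inl a, Sum.inr i => ![Q0S i, Q1S i] a
      | Sum.inr i, Sum.inl a => ![Q0S i, Q1S i] a
      | Sum.inl _, Sum.inl _ => ∅
      | Sum.inr _, Sum.inr _ => ∅,
    ?_, ?_, ?_, ?_, ?_, ?_, ?_, ?_⟩⟩
  · -- Psymm
    rintro (a | i) (b | j) <;> rfl
  · -- Bnonempty
    rintro (a | i)
    · show (![A0, A1] a).Nonempty
      fin_cases a
      · obtain ⟨b0, hb0⟩ := M.Bnonempty none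
        exact ⟨b0, Or.inl hb0⟩
      · obtain ⟨b1, hb1⟩ := M.Bnonempty (some ⟨0, ht⟩)
        exact ⟨b1, Or.inl (Set.mem_iUnion.mpr ⟨⟨0, ht⟩, hb1⟩)⟩
    · obtain ⟨p, hp, _⟩ := hCQ0 i
      exact ⟨p, hp⟩
  · -- Bconnected
    rintro (a | i)
    · show (G.induce (![A0, A1] a)).Connected
      fin_cases a
      · exact hA0conn
      · exact hA1conn
    · exact hCcon i
  · -- Pconnected
    rintro (a | i) (b | j) hadj
    · simp at hadj
    · show (G.induce (![Q0S j, Q1S j] a)).Connected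
      fin_cases a
      · exact hQ0con j
      · exact hQ1con j
    · show (G.induce (![Q0S i, Q1S i] b)).Connected
      fin_cases b
      · exact hQ0con i
      · exact hQ1con i
    · simp at hadj
  · -- meets
    rintro (a | i) (b | j) hadj
    · simp at hadj
    · show ((![A0, A1] a) ∩ (![Q0S j, Q1S j] a)).Nonempty
      fin_cases a
      · obtain ⟨p, hpL, hpQ⟩ := hLQ0 j
        exact ⟨p, Or.inr (Set.mem_iUnion.mpr ⟨j, hpL⟩), hpQ⟩
      · obtain ⟨w1, hw1B, hw1Q⟩ := hw1ex j
        exact ⟨w1, Or.inl (Set.mem_iUnion.mpr ⟨j, hw1B⟩), hw1Q⟩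
    · show (CS i ∩ (![Q0S i, Q1S i] b)).Nonempty
      fin_cases b
      · exact hCQ0 i
      · exact hCQ1 i
    · simp at hadj
  · -- far_BB
    rintro (a | i) (b | j) huv x hx y hy
    · have hx' : x ∈ ![A0, A1] a := hx
      have hy' : y ∈ ![A0, A1] b := hy
      have hab : a ≠ b := fun hc => huv (by rw [hc])
      fin_cases a <;> fin_cases b
      · exact absurd rfl hab
      · simp only [Matrix.cons_val_zero] at hx'
        simp only [Matrix.cons_val_one, Matrix.head_cons] at hy'
        exact dA0A1 x hx' y hy'
      · simp only [Matrix.cons_val_one, Matrix.head_cons] at hx'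
        simp only [Matrix.cons_val_zero] at hy'
        rw [SimpleGraph.edist_comm]
        exact dA0A1 y hy' x hx'
      · exact absurd rfl hab
    · have hx' : x ∈ ![A0, A1] a := hx
      have hy' : y ∈ CS j := hy
      fin_cases a
      · simp only [Matrix.cons_val_zero] at hx'
        exact dA0C j x hx' y hy'
      · simp only [Matrix.cons_val_one, Matrix.head_cons] at hx'
        exact dA1C j x hx' y hy'
    · have hx' : x ∈ CS i := hx
      have hy' : y ∈ ![A0, A1] b := hy
      rw [SimpleGraph.edist_comm]
      fin_cases b
      · simp only [Matrix.cons_val_zero] at hy'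
        exact dA0C i y hy' x hx'
      · simp only [Matrix.cons_val_one, Matrix.head_cons] at hy'
        exact dA1C i y hy' x hx'
    · have hij : i ≠ j := fun hc => huv (by rw [hc])
      exact dCC i j hij x hx y hy
  · -- far_BP
    rintro (a | i) (b | j) w hadj hwu hwv x hx y hy
    · simp at hadj
    · -- edge (inl a, inr j)
      have hy' : y ∈ ![Q0S j, Q1S j] a := hy
      rcases w with c | jj
      · have hca : c ≠ a := fun hc => hwu (by rw [hc])
        have hx' : x ∈ ![A0, A1] c := hx
        fin_cases a <;> fin_cases c
        · exact absurd rfl hca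
        · simp only [Matrix.cons_val_zero] at hy'
          simp only [Matrix.cons_val_one, Matrix.head_cons] at hx'
          exact dA1Q0 j x hx' y hy'
        · simp only [Matrix.cons_val_one, Matrix.head_cons] at hy'
          simp only [Matrix.cons_val_zero] at hx'
          exact dA0Q1 j x hx' y hy'
        · exact absurd rfl hca
      · have hjj : jj ≠ j := fun hc => hwv (by rw [hc])
        have hx' : x ∈ CS jj := hx
        exact dCQ j jj hjj x hx' y (hQcert a j y hy')
    · -- edge (inr i, inl b)
      have hy' : y ∈ ![Q0S i, Q1S i] b := hy
      rcases w with c | jj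
      · have hca : c ≠ b := fun hc => hwv (by rw [hc])
        have hx' : x ∈ ![A0, A1] c := hx
        fin_cases b <;> fin_cases c
        · exact absurd rfl hca
        · simp only [Matrix.cons_val_zero] at hy'
          simp only [Matrix.cons_val_one, Matrix.head_cons] at hx'
          exact dA1Q0 i x hx' y hy'
        · simp only [Matrix.cons_val_one, Matrix.head_cons] at hy'
          simp only [Matrix.cons_val_zero] at hx'
          exact dA0Q1 i x hx' y hy'
        · exact absurd rfl hca
      · have hjj : jj ≠ i := fun hc => hwu (by rw [hc])
        have hx' : x ∈ CS jj := hx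
        exact dCQ i jj hjj x hx' y (hQcert b i y hy')
    · simp at hadj
  · -- far_PP
    rintro (a | i) (b | j) (a' | i') (b' | j') hadj hadj' hs x hx y hy
    all_goals try simp at hadj
    all_goals try simp at hadj'
    · refine hQQ a j a' j' ?_ x hx y hy
      rintro ⟨rfl, rfl⟩
      exact hs rfl
    · refine hQQ a j b' i' ?_ x hx y hy
      rintro ⟨rfl, rfl⟩
      exact hs Sym2.eq_swap
    · refine hQQ b i a' j' ?_ x hx y hy
      rintro ⟨rfl, rfl⟩
      exact hs Sym2.eq_swap
    · refine hQQ b i b' i' ?_ x hx y hy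
      rintro ⟨rfl, rfl⟩
      exact hs rfl
end

section
/- Let G be a connected graph, r ≥ 2 an integer, H = G^r, and v a vertex of G. Then the vertices of any v-rooted isometric path Q of G can be covered by r many v-rooted isometric paths of H. -/
open SimpleGraph

variable {V : Type*}

/-- The `r`-th power of `G`: two distinct vertices are adjacent iff their distance in `G`
is at most `r`. -/
def SimpleGraph.power (G : SimpleGraph V) (r : ℕ) : SimpleGraph V where
  Adj u v := u ≠ v ∧ G.Reachable u v ∧ G.dist u v ≤ r
  symm := by
    constructor
    rintro u v ⟨h1, h2, h3⟩
    exact ⟨h1.symm, h2.symm, by rwa [G.dist_comm]⟩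
  loopless := by constructor; rintro u ⟨h1, -, -⟩; exact h1 rfl

/-- the vertices of any `v`-rooted isometric path `Q` of a connected graph
`G` can be covered by `r` many `v`-rooted isometric paths of `H = G^r`. -/
theorem rooted_cover_in_power (G : SimpleGraph V) (hG : G.Connected)
    (r : ℕ) (hr : 2 ≤ r) (v : V) {w : V} (q : G.Walk v w)
    (hq : IsometricPath G q) :
    ∃ Q : Fin r → Σ x : V, (G.power r).Walk v x,
      (∀ i, IsometricPath (G.power r) (Q i).2) ∧
      ∀ x ∈ q.support, ∃ i, x ∈ (Q i).2.support := by
  classical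
  obtain ⟨hqp, hql⟩ := hq
  set H := G.power r with hH
  set n := q.length with hn
  have hr0 : 0 < r := by omega
  -- segment bound
  have hseg : ∀ a d : ℕ, G.dist (q.getVert a) (q.getVert (a + d)) ≤ d := by
    intro a d
    induction d with
    | zero => simp [SimpleGraph.dist_self]
    | succ d ih =>
      have step : G.dist (q.getVert (a + d)) (q.getVert (a + d + 1)) ≤ 1 := by
        by_cases h : a + d < q.length
        · simpa using dist_le (Walk.cons (q.adj_getVert_succ h) Walk.nil)
        · rw [q.getVert_of_length_le (le_of_not_gt h), q.getVert_of_length_le (by omega)]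
          simp [SimpleGraph.dist_self]
      calc G.dist (q.getVert a) (q.getVert (a + (d + 1)))
          ≤ G.dist (q.getVert a) (q.getVert (a + d))
              + G.dist (q.getVert (a + d)) (q.getVert (a + d + 1)) := by
            rw [show a + (d + 1) = a + d + 1 by omega]; exact hG.dist_triangle
        _ ≤ d + 1 := by omega
  -- exact distance from the root
  have hdist : ∀ a, a ≤ n → G.dist v (q.getVert a) = a := by
    intro a ha
    have h1 : G.dist v (q.getVert a) ≤ a := by
      have := hseg 0 a; simpa using this
    have h2 : G.dist (q.getVert a) w ≤ n - a := by
      have := hseg a (n - a)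
      rwa [show a + (n - a) = n by omega, hn, q.getVert_length] at this
    have h3 : G.dist v w ≤ G.dist v (q.getVert a) + G.dist (q.getVert a) w :=
      hG.dist_triangle
    omega
  have hinj : ∀ a b, a ≤ n → b ≤ n → q.getVert a = q.getVert b → a = b := by
    intro a b ha hb h
    rw [← hdist a ha, ← hdist b hb, h]
  -- adjacency in the power graph along the path
  have hadj : ∀ a b, a ≤ n → b ≤ n → a < b → b - a ≤ r →
      H.Adj (q.getVert a) (q.getVert b) := by
    intro a b ha hb hab hbr
    refine ⟨fun h => absurd (hinj a b ha hb h) (by omega), hG _ _, ?_⟩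
    have := hseg a (b - a)
    rw [show a + (b - a) = b by omega] at this
    omega
  -- each H-edge moves G-distance at most r
  have hGH : ∀ (a b : V) (p : H.Walk a b), G.dist a b ≤ r * p.length := by
    intro a b p
    induction p with
    | nil => simp [SimpleGraph.dist_self]
    | @cons x y z hxy p ih =>
      have hd := hxy.2.2
      calc G.dist x z ≤ G.dist x y + G.dist y z := hG.dist_triangle
        _ ≤ r + r * p.length := add_le_add hd ih
        _ = r * (Walk.cons hxy p).length := by
            rw [Walk.length_cons, Nat.mul_add, Nat.mul_one, Nat.add_comm]
  have hGHd : ∀ (b : V), H.Reachable v b → G.dist v b ≤ r * H.dist v b := by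
    intro b hb
    obtain ⟨p, hp⟩ := hb.exists_walk_length_eq_dist
    rw [← hp]; exact hGH v b p
  -- the chain construction
  have chain : ∀ k j : ℕ, j + k * r ≤ n →
      ∃ p : H.Walk (q.getVert j) (q.getVert (j + k * r)),
        p.length = k ∧ ∀ t ≤ k, q.getVert (j + t * r) ∈ p.support := by
    intro k
    induction k with
    | zero =>
      intro j hj
      refine ⟨(Walk.nil : H.Walk (q.getVert j) (q.getVert j)).copy rfl (by norm_num), ?_, ?_⟩
      · simp
      · intro t ht
        interval_cases t
        simp
    | succ k ih =>
      intro j hj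
      have e : j + r + k * r = j + (k + 1) * r := by ring
      obtain ⟨p, hp1, hp2⟩ := ih (j + r) (by omega)
      have hA : H.Adj (q.getVert j) (q.getVert (j + r)) :=
        hadj j (j + r) (by omega) (by omega) (by omega) (by omega)
      refine ⟨Walk.cons hA (p.copy rfl (congrArg q.getVert e)), ?_, ?_⟩
      · simp [hp1]
      · intro t ht
        match t with
        | 0 => simp
        | t + 1 =>
          rw [Walk.support_cons]
          refine List.mem_cons_of_mem _ ?_
          rw [Walk.support_copy]
          have := hp2 t (by omega)
          rwa [show j + (t + 1) * r = j + r + t * r by ring]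
  -- the r covering paths
  have key : ∀ i : Fin r, ∃ S : Σ x : V, H.Walk v x, IsometricPath H S.2 ∧
      ((i.val = 0 → ∀ t ≤ n / r, q.getVert (t * r) ∈ S.2.support) ∧
       (1 ≤ i.val → i.val ≤ n → ∀ t ≤ (n - i.val) / r,
          q.getVert (i.val + t * r) ∈ S.2.support)) := by
    intro i
    rcases Nat.eq_zero_or_pos i.val with hi0 | hi1
    · -- residue 0
      have hm' : 0 + n / r * r ≤ n := by
        have := Nat.div_mul_le_self n r; omega
      obtain ⟨p, hp1, hp2⟩ := chain (n / r) 0 hm'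
      set W := p.copy q.getVert_zero rfl with hW
      have hreach : H.Reachable v (q.getVert (0 + n / r * r)) := W.reachable
      have hle : H.dist v (q.getVert (0 + n / r * r)) ≤ n / r := by
        have := dist_le W
        rwa [hW, Walk.length_copy, hp1] at this
      have hge : n / r ≤ H.dist v (q.getVert (0 + n / r * r)) := by
        have h1 := hGHd _ hreach
        rw [hdist _ hm'] at h1
        have h2 : r * (n / r) ≤ r * H.dist v (q.getVert (0 + n / r * r)) := by
          calc r * (n / r) = 0 + n / r * r := by ring
            _ ≤ _ := h1
        exact Nat.le_of_mul_le_mul_left h2 hr0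
      have hlen : W.length = H.dist v (q.getVert (0 + n / r * r)) := by
        rw [hW, Walk.length_copy, hp1]; omega
      refine ⟨⟨_, W⟩, ⟨Walk.isPath_of_length_eq_dist _ hlen, hlen⟩, ?_, ?_⟩
      · intro _ t ht
        rw [hW, Walk.support_copy]
        simpa using hp2 t ht
      · intro h; omega
    · -- positive residue
      by_cases hin : i.val ≤ n
      · set k := (n - i.val) / r with hk
        have hm' : i.val + k * r ≤ n := by
          have h := Nat.div_mul_le_self (n - i.val) r
          rw [← hk] at h; omega
        obtain ⟨p, hp1, hp2⟩ := chain k i.val hm'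
        have hA0 : H.Adj (q.getVert 0) (q.getVert i.val) :=
          hadj 0 i.val (by omega) hin hi1 (by have := i.isLt; omega)
        rw [q.getVert_zero] at hA0
        set W := Walk.cons hA0 p with hW
        have hreach : H.Reachable v (q.getVert (i.val + k * r)) := W.reachable
        have hle : H.dist v (q.getVert (i.val + k * r)) ≤ k + 1 := by
          have := dist_le W
          rwa [hW, Walk.length_cons, hp1] at this
        have hge : k + 1 ≤ H.dist v (q.getVert (i.val + k * r)) := by
          have h1 := hGHd _ hreach
          rw [hdist _ hm'] at h1
          by_contra hc
          push_neg at hc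
          have hdk : H.dist v (q.getVert (i.val + k * r)) ≤ k := by omega
          have h2 : r * H.dist v (q.getVert (i.val + k * r)) ≤ r * k :=
            Nat.mul_le_mul_left r hdk
          have h3 : r * k = k * r := Nat.mul_comm r k
          omega
        have hlen : W.length = H.dist v (q.getVert (i.val + k * r)) := by
          rw [hW, Walk.length_cons, hp1]; omega
        refine ⟨⟨_, W⟩, ⟨Walk.isPath_of_length_eq_dist _ hlen, hlen⟩, ?_, ?_⟩
        · intro h; omega
        · intro _ _ t ht
          rw [hW, Walk.support_cons]
          exact List.mem_cons_of_mem _ (hp2 t ht)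
      · refine ⟨⟨v, Walk.nil⟩, ⟨Walk.IsPath.nil, by simp [SimpleGraph.dist_self]⟩, ?_, ?_⟩
        · intro h; omega
        · intro _ h; omega
  choose Q hQ1 hQ2 using key
  refine ⟨Q, fun i => hQ1 i, ?_⟩
  intro x hx
  rw [Walk.mem_support_iff_exists_getVert] at hx
  obtain ⟨j, hjx, hj⟩ := hx
  rcases Nat.eq_zero_or_pos j with hj0 | hj1
  · refine ⟨⟨0, by omega⟩, ?_⟩
    have hxv : x = v := by rw [← hjx, hj0, q.getVert_zero]
    rw [hxv]; exact Walk.start_mem_support _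
  · have hmd : j % r + j / r * r = j := Nat.mod_add_div' j r
    rcases Nat.eq_zero_or_pos (j % r) with hi0 | hipos
    · refine ⟨⟨0, by omega⟩, ?_⟩
      have hcov := (hQ2 ⟨0, by omega⟩).1 rfl (j / r) (by
        rw [Nat.le_div_iff_mul_le hr0]; omega)
      rw [← hjx]
      convert hcov using 2
      omega
    · have hir : j % r < r := Nat.mod_lt _ hr0
      refine ⟨⟨j % r, hir⟩, ?_⟩
      have hcov := (hQ2 ⟨j % r, hir⟩).2 (by show 1 ≤ j % r; omega)
        (by show j % r ≤ n; omega) (j / r) (by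
          show j / r ≤ (n - j % r) / r
          rw [Nat.le_div_iff_mul_le hr0]; omega)
      rw [← hjx]
      convert hcov using 2
      show j = j % r + j / r * r
      omega
end

section
/- Let G be a connected graph and r ≥ 2 an integer. Then any isometric path of H = G^r contains at most one edge that is also an edge of G (i.e., at most one edge joining vertices adjacent in G). -/
open SimpleGraph

variable {V : Type*}

/-- split a walk at position n -/
lemma walk_split {G : SimpleGraph V} :
    ∀ (n : ℕ) {x y : V} (w : G.Walk x y),
      ∃ (z : V) (w₁ : G.Walk x z) (w₂ : G.Walk z y),
        w₁.length = min n w.length ∧ w₂.length = w.length - min n w.length := by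
  intro n
  induction n with
  | zero => intro x y w; exact ⟨x, .nil, w, by simp, by simp⟩
  | succ n ih =>
    intro x y w
    cases w with
    | nil => exact ⟨x, .nil, .nil, by simp, by simp⟩
    | cons h w' =>
      obtain ⟨z, w₁, w₂, h1, h2⟩ := ih w'
      exact ⟨z, .cons h w₁, w₂, by simp [h1, Nat.succ_min_succ], by
        simp [h2, Nat.succ_min_succ]⟩

/-- dart split -/
lemma dart_split {G : SimpleGraph V} :
    ∀ {x y : V} (w : G.Walk x y) (d : G.Dart), d ∈ w.darts →
      ∃ (w₁ : G.Walk x d.fst) (w₂ : G.Walk d.snd y),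
        w.length = w₁.length + w₂.length + 1 := by
  intro x y w
  induction w with
  | nil => intro d hd; simp at hd
  | cons h w' ih =>
    intro d hd
    rw [Walk.darts_cons, List.mem_cons] at hd
    rcases hd with hd | hd
    · subst hd
      exact ⟨.nil, w', by simp [Nat.add_comm]⟩
    · obtain ⟨w₁, w₂, hl⟩ := ih d hd
      exact ⟨.cons h w₁, w₂, by simp [hl]; omega⟩

/-- an H-walk gives a G-distance bound -/
lemma dist_le_r_mul {G : SimpleGraph V} (hG : G.Connected) (r : ℕ) :
    ∀ {x y : V} (q : (G.power r).Walk x y), G.dist x y ≤ r * q.length := by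
  intro x y q
  induction q with
  | nil => simp
  | @cons a b c h q' ih =>
    calc G.dist a c ≤ G.dist a b + G.dist b c := hG.dist_triangle
    _ ≤ r + r * q'.length := Nat.add_le_add h.2.2 ih
    _ = r * (q'.length + 1) := by ring

lemma power_connected {G : SimpleGraph V} (hG : G.Connected) {r : ℕ} (hr : 1 ≤ r) :
    (G.power r).Connected := by
  apply hG.mono
  intro a b hab
  refine ⟨hab.ne, hab.reachable, ?_⟩
  have := SimpleGraph.dist_le (Walk.cons hab .nil)
  simp at this; omega

/-- from a G-distance bound get an H-distance bound -/
lemma power_dist_le {G : SimpleGraph V} (hG : G.Connected) {r : ℕ} (hr : 1 ≤ r) :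
    ∀ (n : ℕ) (x y : V), G.dist x y ≤ n * r → (G.power r).dist x y ≤ n := by
  intro n
  induction n with
  | zero =>
    intro x y hxy
    have hxy0 : G.dist x y = 0 := by omega
    have : x = y := (hG.dist_eq_zero_iff).mp hxy0
    subst this
    simp [SimpleGraph.dist_self]
  | succ n ih =>
    intro x y hxy
    by_cases hd : G.dist x y ≤ r
    · by_cases hxy' : x = y
      · subst hxy'; simp [SimpleGraph.dist_self]
      · have hadj : (G.power r).Adj x y := ⟨hxy', hG.preconnected x y, hd⟩
        have := SimpleGraph.dist_le (Walk.cons hadj (.nil : (G.power r).Walk y y))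
        simp at this; omega
    · obtain ⟨w, hw⟩ := (hG.preconnected x y).exists_walk_length_eq_dist
      obtain ⟨z, w₁, w₂, h1, h2⟩ := walk_split r w
      have hmin : min r w.length = r := by omega
      have hxz : G.dist x z ≤ r := by have := SimpleGraph.dist_le w₁; omega
      have hzy : G.dist z y ≤ n * r := by
        have h3 := SimpleGraph.dist_le w₂
        have h4 : (n + 1) * r = n * r + r := by ring
        omega
      have h1' : (G.power r).dist x z ≤ 1 := by
        by_cases hxz' : x = z
        · subst hxz'; simp [SimpleGraph.dist_self]
        · have hadj : (G.power r).Adj x z := ⟨hxz', hG.preconnected x z, hxz⟩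
          have := SimpleGraph.dist_le (Walk.cons hadj (.nil : (G.power r).Walk z z))
          simp at this; omega
      have := (power_connected hG hr).dist_triangle (u := x) (v := z) (w := y)
      have := ih z y hzy
      omega

/-- key lemma: shortcut -/
lemma key_lemma {G : SimpleGraph V} (hG : G.Connected) {r : ℕ} (hr : 2 ≤ r)
    {u w v : V} (h : (G.power r).Adj u w) (q : (G.power r).Walk w v)
    (hlen : (Walk.cons h q).length = (G.power r).dist u v)
    (hg : G.Adj u w) {e : Sym2 V} (he : e ∈ q.edges) (heG : e ∈ G.edgeSet) :
    False := by
  rw [Walk.edges, List.mem_map] at he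
  obtain ⟨d, hd, hde⟩ := he
  obtain ⟨⟨a, b⟩, hadj⟩ := d
  have hab : G.Adj a b := by
    rw [← SimpleGraph.mem_edgeSet]
    have : ({ toProd := (a, b), adj := hadj } : (G.power r).Dart).edge = s(a, b) := rfl
    rw [← this, hde]
    exact heG
  obtain ⟨q₁, q₂, hql⟩ := dart_split q _ hd
  set k := q₁.length with hk
  set m := q₂.length with hm
  -- G.dist u b ≤ 1 + r * k + 1
  have h1 : G.dist w a ≤ r * k := dist_le_r_mul hG r q₁
  have h2 : G.dist u b ≤ r * k + 2 := by
    have t1 := hG.dist_triangle (u := u) (v := w) (w := b)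
    have t2 := hG.dist_triangle (u := w) (v := a) (w := b)
    have t3 : G.dist u w ≤ 1 := by
      have := SimpleGraph.dist_le (Walk.cons hg (.nil : G.Walk w w))
      simpa using this
    have t4 : G.dist a b ≤ 1 := by
      have := SimpleGraph.dist_le (Walk.cons hab (.nil : G.Walk b b))
      simpa using this
    omega
  have h3 : G.dist u b ≤ (k + 1) * r := by nlinarith
  have h4 : (G.power r).dist u b ≤ k + 1 :=
    power_dist_le hG (show 1 ≤ r by omega) (k + 1) u b h3
  have h5 : (G.power r).dist b v ≤ m := SimpleGraph.dist_le q₂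
  have h6 := (power_connected hG (show 1 ≤ r by omega)).dist_triangle
    (u := u) (v := b) (w := v)
  have h7 : (Walk.cons h q).length = k + m + 2 := by
    simp [Walk.length_cons, hql]
  omega

theorem at_most_one_black_edge' (G : SimpleGraph V) (hG : G.Connected)
    (r : ℕ) (hr : 2 ≤ r) : ∀ {u v : V} (p : (G.power r).Walk u v),
    p.length = (G.power r).dist u v →
    ∀ e₁ ∈ p.edges, ∀ e₂ ∈ p.edges, e₁ ∈ G.edgeSet → e₂ ∈ G.edgeSet → e₁ = e₂ := by
  intro u v p
  induction p with
  | nil => intro _ e₁ he₁; simp at he₁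
  | @cons u w v h q ih =>
    intro hlen e₁ he₁ e₂ he₂ hg₁ hg₂
    rw [Walk.edges_cons, List.mem_cons] at he₁ he₂
    have hq : q.length = (G.power r).dist w v := by
      have t1 := SimpleGraph.dist_le q
      have t2 := (power_connected hG (show 1 ≤ r by omega)).dist_triangle (u := u) (v := w) (w := v)
      have t3 : (G.power r).dist u w ≤ 1 := by
        have := SimpleGraph.dist_le (Walk.cons h (.nil : (G.power r).Walk w w))
        simp at this; omega
      simp [Walk.length_cons] at hlen
      omega
    rcases he₁ with he₁ | he₁ <;> rcases he₂ with he₂ | he₂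
    · rw [he₁, he₂]
    · exact absurd (key_lemma hG hr h q hlen (by rwa [← SimpleGraph.mem_edgeSet, ← he₁]) he₂ hg₂) id
    · exact absurd (key_lemma hG hr h q hlen (by rwa [← SimpleGraph.mem_edgeSet, ← he₂]) he₁ hg₁) id
    · exact ih hq e₁ he₁ e₂ he₂ hg₁ hg₂

/-- any isometric path of `G^r` (`r ≥ 2`, `G` connected) contains at most one
edge that is also an edge of `G`. -/
theorem at_most_one_black_edge (G : SimpleGraph V) (hG : G.Connected)
    (r : ℕ) (hr : 2 ≤ r) {u v : V} (p : (G.power r).Walk u v)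
    (hp : IsometricPath (G.power r) p) :
    ∀ e₁ ∈ p.edges, ∀ e₂ ∈ p.edges, e₁ ∈ G.edgeSet → e₂ ∈ G.edgeSet → e₁ = e₂ :=
  at_most_one_black_edge' G hG r hr p hp.2
end

section
/- Let G be a graph and let e₁e₂…e_k (k ≥ 2) be an isometric path in the line graph L(G). Then the edges e₂, e₃, …, e_{k-1} induce an isometric path in G. -/
open SimpleGraph

variable {V : Type*}

/-- Any walk in `G` between a vertex of edge `x` and a vertex of edge `y` lifts to a walk
in the line graph of length at most one more. -/
private lemma exists_lineWalk (G : SimpleGraph V) :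
    ∀ {u v : V} (w : G.Walk u v) (x y : G.edgeSet),
      u ∈ (x : Sym2 V) → v ∈ (y : Sym2 V) →
      ∃ W : G.lineGraph.Walk x y, W.length ≤ w.length + 1 := by
  intro u v w
  induction w with
  | nil =>
    intro x y hu hv
    by_cases hxy : x = y
    · subst hxy; exact ⟨.nil, by simp⟩
    · exact ⟨.cons (lineGraph_adj_iff_exists.mpr ⟨hxy, _, hu, hv⟩) .nil, by simp⟩
  | @cons u u' v h w' ih =>
    intro x y hu hv
    have hg : s(u, u') ∈ G.edgeSet := h
    obtain ⟨W', hW'⟩ := ih ⟨s(u, u'), hg⟩ y (by simp) hv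
    by_cases hxg : x = ⟨s(u, u'), hg⟩
    · subst hxg
      exact ⟨W', by simp; omega⟩
    · refine ⟨.cons (lineGraph_adj_iff_exists.mpr ⟨hxg, u, hu, by simp⟩) W', ?_⟩
      simp only [Walk.length_cons]
      omega

private lemma tail_dropLast_comm {α : Type*} (l : List α) :
    l.tail.dropLast = l.dropLast.tail := by
  induction l with
  | nil => simp
  | cons a l ih =>
    cases l with
    | nil => simp
    | cons b l => simp [List.dropLast_cons_of_ne_nil]

private lemma rev_mid {α : Type*} (l : List α) :
    (l.reverse.drop 1).dropLast = ((l.drop 1).dropLast).reverse := by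
  have h : ∀ m : List α, m.reverse.dropLast = m.tail.reverse := by
    intro m
    have h2 := List.tail_reverse (l := m.reverse)
    rw [List.reverse_reverse] at h2
    rw [h2, List.reverse_reverse]
  rw [List.drop_one, List.tail_reverse, h, List.drop_one,
    tail_dropLast_comm]

/-- If `p` is a shortest path of length at least `3` in the line graph and `q` is a walk
whose edges are the middle vertices of `p`, then the first vertex of `q` belongs to the
first edge `e`. -/
private lemma first_mem (G : SimpleGraph V) {e f : G.edgeSet} (p : G.lineGraph.Walk e f)
    (hp : p.IsPath) (hd : p.length = G.lineGraph.dist e f) (h3 : 3 ≤ p.length)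
    {a b : V} (q : G.Walk a b)
    (hedges : q.edges = ((p.support.drop 1).dropLast).map Subtype.val) :
    a ∈ (e : Sym2 V) := by
  cases p with
  | nil => simp at h3
  | @cons _ e₂ _ h₁ p₁ =>
    cases p₁ with
    | nil => simp at h3
    | @cons _ e₃ _ h₂ p₂ =>
      cases p₂ with
      | nil => simp at h3
      | @cons _ e₄ _ h₃ p₃ =>
        -- compute the first two edges of q
        rw [Walk.support_cons, Walk.support_cons, Walk.support_cons, List.drop_one,
          List.tail_cons, List.dropLast_cons_of_ne_nil (by simp),
          List.dropLast_cons_of_ne_nil (by simp [Walk.support_ne_nil])] at hedges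
        cases q with
        | nil => simp at hedges
        | @cons _ c _ ha q' =>
          rw [Walk.edges_cons, List.map_cons, List.map_cons, List.cons_eq_cons] at hedges
          obtain ⟨he₂, hedges'⟩ := hedges
          cases q' with
          | nil => simp at hedges'
          | @cons _ c₂ _ hc q₂ =>
            rw [Walk.edges_cons, List.cons_eq_cons] at hedges'
            obtain ⟨he₃, -⟩ := hedges'
            obtain ⟨hne, m, hm₁, hm₂⟩ := lineGraph_adj_iff_exists.mp h₁
            have hm₂' : m ∈ s(a, c) := by rw [he₂]; exact hm₂
            rcases Sym2.mem_iff.mp hm₂' with rfl | rfl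
            · exact hm₁
            · -- m = c : shortcut e → e₃, contradiction with shortest
              exfalso
              have hce₃ : m ∈ (e₃ : Sym2 V) := by
                have : m ∈ s(m, c₂) := Sym2.mem_mk_left _ _
                rwa [he₃] at this
              have hee₃ : e ≠ e₃ := by
                have := hp.support_nodup
                simp only [Walk.support_cons, List.nodup_cons] at this
                intro hEq
                exact this.1 (by rw [hEq]; simp [Walk.start_mem_support])
              have hadj : G.lineGraph.Adj e e₃ :=
                lineGraph_adj_iff_exists.mpr ⟨hee₃, m, hm₁, hce₃⟩
              have hW := G.lineGraph.dist_le (Walk.cons hadj (Walk.cons h₃ p₃))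
              simp only [Walk.length_cons] at hW hd
              omega

/-- if `e₁e₂…e_k` (`k ≥ 2`) is an isometric path in the line graph `L(G)`,
then the edges `e₂, …, e_{k-1}` induce an isometric path in `G`: any path of `G` whose
edge list is exactly `e₂, …, e_{k-1}` is isometric. -/
theorem middle_edges_isometric (G : SimpleGraph V) (hG : G.Connected)
    {e f : G.edgeSet} (p : G.lineGraph.Walk e f)
    (hp : IsometricPath G.lineGraph p) (hk : 2 ≤ p.support.length)
    {a b : V} (q : G.Walk a b) (hq : q.IsPath)
    (hedges : q.edges = ((p.support.drop 1).dropLast).map Subtype.val) :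
    IsometricPath G q := by
  obtain ⟨hpath, hd⟩ := hp
  refine ⟨hq, ?_⟩
  have hsup : p.support.length = p.length + 1 := p.length_support
  have hql : q.length = p.length - 1 := by
    have := congrArg List.length hedges
    simp only [Walk.length_edges, List.length_map, List.length_dropLast,
      List.length_drop] at this
    omega
  have h1 : 1 ≤ p.length := by omega
  rcases lt_or_ge p.length 3 with hlt | hge
  · interval_cases hpl : p.length
    · -- p.length = 1 : q is trivial
      have : a = b := q.eq_of_length_eq_zero (by omega)
      subst this
      simpa [hql] using (G.dist_self (v := a)).symm
    · -- p.length = 2 : q is a single edge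
      have hadj : G.Adj a b := q.adj_of_length_eq_one (by omega)
      have := dist_eq_one_iff_adj.mpr hadj
      omega
  · -- main case
    have ha : a ∈ (e : Sym2 V) := first_mem G p hpath hd hge q hedges
    have hb : b ∈ (f : Sym2 V) := by
      refine first_mem G p.reverse hpath.reverse ?_ (by simpa) q.reverse ?_
      · simp [hd, G.lineGraph.dist_comm]
      · rw [Walk.edges_reverse, hedges, Walk.support_reverse, rev_mid, List.map_reverse]
    obtain ⟨w, hw⟩ := hG.exists_walk_length_eq_dist a b
    obtain ⟨W, hW⟩ := exists_lineWalk G w e f ha hb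
    have hdle := G.lineGraph.dist_le W
    have hle := G.dist_le q
    omega
end

section
/- If P is an isometric path in a graph G, then its line graph L(P) (the path in L(G) on the edges of P in order) is an isometric path in L(G). -/
open SimpleGraph

variable {V : Type*}

lemma dist_le_one_of_mem_edge (G : SimpleGraph V) {e : G.edgeSet} {u w : V}
    (hu : u ∈ (e : Sym2 V)) (hw : w ∈ (e : Sym2 V)) : G.dist u w ≤ 1 := by
  rcases eq_or_ne u w with rfl | hne
  · simp [SimpleGraph.dist_self]
  · have he := ((Sym2.mem_and_mem_iff hne).mp ⟨hu, hw⟩)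
    have : G.Adj u w := by
      have := e.2
      rw [he] at this
      exact this
    simpa using SimpleGraph.dist_le (SimpleGraph.Walk.cons this SimpleGraph.Walk.nil)

lemma dist_le_lineWalk (G : SimpleGraph V) (hG : G.Connected) :
    ∀ {e f : G.edgeSet} (W : G.lineGraph.Walk e f) {u v : V},
      u ∈ (e : Sym2 V) → v ∈ (f : Sym2 V) → G.dist u v ≤ W.length + 1 := by
  intro e f W
  induction W with
  | nil => intro u v hu hv; simpa using dist_le_one_of_mem_edge G hu hv
  | cons h W ih =>
      intro u v hu hv
      obtain ⟨hne, w, hw1, hw2⟩ := (SimpleGraph.lineGraph_adj_iff_exists).mp h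
      calc G.dist u v ≤ G.dist u w + G.dist w v := hG.dist_triangle
        _ ≤ 1 + (W.length + 1) := by
            exact Nat.add_le_add (dist_le_one_of_mem_edge G hu hw1) (ih hw2 hv)
        _ = (SimpleGraph.Walk.cons h W).length + 1 := by simp [SimpleGraph.Walk.length_cons]; omega

lemma start_mem_head (G : SimpleGraph V) {u v : V} (p : G.Walk u v)
    {a : Sym2 V} {l : List (Sym2 V)} (h : p.edges = a :: l) : u ∈ a := by
  cases p with
  | nil => simp at h
  | cons hadj p' =>
      rw [SimpleGraph.Walk.edges_cons] at h
      obtain ⟨rfl, -⟩ := List.cons.injEq .. ▸ h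
      exact Sym2.mem_mk_left _ _

lemma first_mem_s10 (G : SimpleGraph V) {u v : V} (p : G.Walk u v)
    {e f : G.edgeSet} (q : G.lineGraph.Walk e f)
    (hsupp : q.support.map Subtype.val = p.edges) : u ∈ (e : Sym2 V) := by
  have hs : q.support = e :: q.support.tail := q.support_eq_cons
  rw [hs, List.map_cons] at hsupp
  exact start_mem_head G p hsupp.symm

/-- if `P` is an isometric path in `G`, then `L(P)`, the path in `L(G)` on
the edges of `P` in order, is an isometric path in `L(G)`. -/
theorem line_of_isometric_isometric (G : SimpleGraph V) (hG : G.Connected)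
    {u v : V} (p : G.Walk u v) (hp : IsometricPath G p)
    {e f : G.edgeSet} (q : G.lineGraph.Walk e f)
    (hsupp : q.support.map Subtype.val = p.edges) :
    IsometricPath G.lineGraph q := by
  have hu : u ∈ (e : Sym2 V) := first_mem_s10 G p q hsupp
  have hv : v ∈ (f : Sym2 V) := by
    apply first_mem_s10 G p.reverse q.reverse
    rw [SimpleGraph.Walk.support_reverse, SimpleGraph.Walk.edges_reverse, List.map_reverse, hsupp]
  have hlen : q.length + 1 = p.length := by
    have h := congrArg List.length hsupp
    simpa using h
  have hpath : q.IsPath := by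
    rw [SimpleGraph.Walk.isPath_def]
    have h : (q.support.map Subtype.val).Nodup := hsupp ▸ hp.1.edges_nodup
    exact h.of_map _
  refine ⟨hpath, le_antisymm ?_ (SimpleGraph.dist_le q)⟩
  obtain ⟨W, hW⟩ := q.reachable.exists_walk_length_eq_dist
  have h1 : G.dist u v ≤ W.length + 1 := dist_le_lineWalk G hG W hu hv
  have h2 : p.length = G.dist u v := hp.2
  rw [hW] at h1
  omega
end

section
/- Let G be a graph, P an isometric (u,v)-path in G, and e₀ any edge of G incident to u. Then the vertices of the path L(P) in L(G) can be covered by two e₀-rooted isometric paths in L(G). -/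
open SimpleGraph

variable {V : Type*}

section AuxLemmas
variable {V : Type*} {G : SimpleGraph V}

lemma adj_or_eq_of_mem_edge {e : Sym2 V} (he : e ∈ G.edgeSet) {x y : V}
    (hx : x ∈ e) (hy : y ∈ e) : x = y ∨ G.Adj x y := by
  induction e using Sym2.ind with
  | _ a b =>
    rw [G.mem_edgeSet] at he
    rw [Sym2.mem_iff] at hx hy
    rcases hx with rfl | rfl <;> rcases hy with rfl | rfl
    · exact Or.inl rfl
    · exact Or.inr he
    · exact Or.inr he.symm
    · exact Or.inl rfl

lemma dist_le_one_of_mem_edge_s11 {e : Sym2 V} (he : e ∈ G.edgeSet) {x y : V}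
    (hx : x ∈ e) (hy : y ∈ e) : G.dist x y ≤ 1 := by
  rcases adj_or_eq_of_mem_edge he hx hy with rfl | hadj
  · simp [SimpleGraph.dist_self]
  · exact le_of_eq (dist_eq_one_iff_adj.mpr hadj)

lemma dist_le_lineWalk_length_add_one (hG : G.Connected) {e f : G.edgeSet}
    (W : G.lineGraph.Walk e f) : ∀ {x y : V}, x ∈ (e : Sym2 V) → y ∈ (f : Sym2 V) →
    G.dist x y ≤ W.length + 1 := by
  induction W with
  | nil =>
    intro x y hx hy
    simpa using dist_le_one_of_mem_edge_s11 (by exact Subtype.prop _) hx hy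
  | @cons a b c hadj W ih =>
    intro x y hx hy
    obtain ⟨-, z, hz1, hz2⟩ := lineGraph_adj_iff_exists.mp hadj
    calc G.dist x y ≤ G.dist x z + G.dist z y := hG.dist_triangle
    _ ≤ 1 + (W.length + 1) := add_le_add (dist_le_one_of_mem_edge_s11 a.2 hx hz1) (ih hz2 hy)
    _ = (W.cons hadj).length + 1 := by simp [Walk.length_cons]; ring

lemma eq_nil_or_concat {u v : V} (p : G.Walk u v) :
    (∃ h : u = v, p = h ▸ Walk.nil) ∨
      ∃ (w : V) (q : G.Walk u w) (h : G.Adj w v), p = q.concat h := by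
  cases p with
  | nil => exact Or.inl ⟨rfl, rfl⟩
  | cons h q => exact Or.inr (Walk.exists_cons_eq_concat h q)

lemma isometric_concat_prefix (hG : G.Connected) {u w x : V} (p : G.Walk u w) (h : G.Adj w x)
    (hiso : IsometricPath G (p.concat h)) : IsometricPath G p := by
  obtain ⟨hpath, hlen⟩ := hiso
  rw [Walk.length_concat] at hlen
  constructor
  · rw [Walk.concat_eq_append] at hpath
    exact hpath.of_append_left
  · have h1 : G.dist u w ≤ p.length := dist_le p
    have h2 : G.dist u x ≤ G.dist u w + G.dist w x := hG.dist_triangle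
    have h3 : G.dist w x = 1 := dist_eq_one_iff_adj.mpr h
    omega

lemma key_lemma_s11 (hG : G.Connected) (e₀ : G.edgeSet) {u : V} (hu : u ∈ (e₀ : Sym2 V)) :
    ∀ (n : ℕ) {w x : V} (p : G.Walk u w) (h : G.Adj w x), p.length = n →
    IsometricPath G (p.concat h) →
    (∃ q₂ : G.lineGraph.Walk e₀ ⟨s(w, x), h⟩, IsometricPath G.lineGraph q₂ ∧
       q₂.length ≤ p.length + 1 ∧
       ∀ e : G.edgeSet, (e : Sym2 V) ∈ (p.concat h).edges → e ∈ q₂.support) ∨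
    (∃ (f₁ : G.edgeSet) (q₁ : G.lineGraph.Walk e₀ f₁)
       (q₂ : G.lineGraph.Walk e₀ ⟨s(w, x), h⟩),
       IsometricPath G.lineGraph q₁ ∧ IsometricPath G.lineGraph q₂ ∧
       q₂.length = p.length ∧
       ∀ e : G.edgeSet, (e : Sym2 V) ∈ (p.concat h).edges →
         e ∈ q₁.support ∨ e ∈ q₂.support) := by
  intro n
  induction n using Nat.strong_induction_on with
  | _ n IH =>
  intro w x p h hn hiso
  rcases eq_nil_or_concat p with ⟨rfl, rfl⟩ | ⟨w', p', h', rfl⟩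
  · -- base case : p = nil, w = u
    by_cases heq : e₀ = ⟨s(u, x), h⟩
    · subst heq
      refine Or.inl ⟨Walk.nil, ⟨Walk.IsPath.nil, by simp [SimpleGraph.dist_self]⟩, by simp, ?_⟩
      intro e he
      simp only [Walk.concat_nil, Walk.edges_cons, Walk.edges_nil, List.mem_singleton] at he
      have : e = (⟨s(u, x), h⟩ : G.edgeSet) := Subtype.ext he
      simp [this]
    · have a1 : G.lineGraph.Adj e₀ ⟨s(u, x), h⟩ :=
        lineGraph_adj_iff_exists.mpr ⟨heq, u, hu, by simp⟩
      refine Or.inl ⟨Walk.cons a1 Walk.nil, ⟨?_, ?_⟩, by simp, ?_⟩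
      · exact (Path.singleton a1).2
      · simp [dist_eq_one_iff_adj.mpr a1]
      · intro e he
        simp only [Walk.concat_nil, Walk.edges_cons, Walk.edges_nil, List.mem_singleton] at he
        have : e = ⟨s(u, x), h⟩ := Subtype.ext he
        simp [this]
  · -- inductive step : p = p'.concat h'
    have hfull' : IsometricPath G (p'.concat h') := isometric_concat_prefix hG _ h hiso
    have hp' : IsometricPath G p' := isometric_concat_prefix hG _ h' hfull'
    have hlen_full : (p'.concat h').length + 1 = G.dist u x := by
      have h2 := hiso.2; rwa [Walk.length_concat] at h2
    have hdw' : G.dist u w' = p'.length := hp'.2.symm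
    have hwx : w' ≠ x := by
      intro hEq
      rw [Walk.length_concat] at hlen_full
      subst hEq
      omega
    have hneq : (⟨s(w', w), h'⟩ : G.edgeSet) ≠ (⟨s(w, x), h⟩ : G.edgeSet) := by
      intro hEq
      have h2 : s(w', w) = s(w, x) := congrArg Subtype.val hEq
      rw [Sym2.eq_iff] at h2
      rcases h2 with ⟨-, h3⟩ | ⟨h3, -⟩
      · exact h.ne h3
      · exact hwx h3
    have a2 : G.lineGraph.Adj ⟨s(w', w), h'⟩ ⟨s(w, x), h⟩ :=
      lineGraph_adj_iff_exists.mpr ⟨hneq, w, by simp, by simp⟩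
    have hx_mem : x ∈ ((⟨s(w, x), h⟩ : G.edgeSet) : Sym2 V) := by simp
    have hdux : G.dist u x = (p'.concat h').length + 1 := hlen_full.symm
    have hdge : G.lineGraph.Reachable e₀ ⟨s(w, x), h⟩ →
        (p'.concat h').length ≤ G.lineGraph.dist e₀ ⟨s(w, x), h⟩ := by
      intro r
      obtain ⟨W, hW⟩ := r.exists_walk_length_eq_dist
      have h2 := dist_le_lineWalk_length_add_one hG W hu hx_mem
      omega
    have hk : (p'.concat h').length = p'.length + 1 := Walk.length_concat _ _
    have hnlt : p'.length < n := by omega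
    rcases IH p'.length hnlt p' h' rfl hfull' with ⟨q₂, hiso₂, hle, hcov⟩ |
        ⟨f₁, q₁, q₂, hiso₁, hiso₂, hlen₂, hcov⟩
    · -- case (A)
      have hreach : G.lineGraph.Reachable e₀ ⟨s(w, x), h⟩ := (q₂.concat a2).reachable
      have hlow := hdge hreach
      have hup : G.lineGraph.dist e₀ ⟨s(w, x), h⟩ ≤ q₂.length + 1 := by
        simpa [Walk.length_concat] using dist_le (q₂.concat a2)
      by_cases hc : G.lineGraph.dist e₀ ⟨s(w, x), h⟩ = q₂.length + 1
      · refine Or.inl ⟨q₂.concat a2, ⟨?_, ?_⟩, ?_, ?_⟩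
        · exact Walk.isPath_of_length_eq_dist _ (by rw [Walk.length_concat, hc])
        · rw [Walk.length_concat, hc]
        · rw [Walk.length_concat]; omega
        · intro e he
          rw [Walk.edges_concat, List.concat_eq_append, List.mem_append, List.mem_singleton] at he
          rcases he with he | he
          · have h2 := hcov e he
            rw [Walk.support_concat, List.mem_append]
            exact Or.inl h2
          · have h2 : e = (⟨s(w, x), h⟩ : G.edgeSet) := Subtype.ext he
            rw [h2]
            exact Walk.end_mem_support _
      · have hdle : G.lineGraph.dist e₀ ⟨s(w, x), h⟩ = (p'.concat h').length := by
          omega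
        obtain ⟨W, hW⟩ := hreach.exists_walk_length_eq_dist
        refine Or.inr ⟨⟨s(w', w), h'⟩, q₂, W, hiso₂,
          ⟨Walk.isPath_of_length_eq_dist _ hW, hW⟩, by rw [hW, hdle], ?_⟩
        intro e he
        rw [Walk.edges_concat, List.concat_eq_append, List.mem_append, List.mem_singleton] at he
        rcases he with he | he
        · exact Or.inl (hcov e he)
        · have h2 : e = (⟨s(w, x), h⟩ : G.edgeSet) := Subtype.ext he
          rw [h2]
          exact Or.inr (Walk.end_mem_support _)
    · -- case (B)
      have hreach : G.lineGraph.Reachable e₀ ⟨s(w, x), h⟩ := (q₂.concat a2).reachable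
      have hlow := hdge hreach
      have hup : G.lineGraph.dist e₀ ⟨s(w, x), h⟩ ≤ q₂.length + 1 := by
        simpa [Walk.length_concat] using dist_le (q₂.concat a2)
      have hc : G.lineGraph.dist e₀ ⟨s(w, x), h⟩ = q₂.length + 1 := by
        omega
      refine Or.inr ⟨f₁, q₁, q₂.concat a2, hiso₁, ⟨?_, ?_⟩, ?_, ?_⟩
      · exact Walk.isPath_of_length_eq_dist _ (by rw [Walk.length_concat, hc])
      · rw [Walk.length_concat, hc]
      · rw [Walk.length_concat]; omega
      · intro e he
        rw [Walk.edges_concat, List.concat_eq_append, List.mem_append, List.mem_singleton] at he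
        rcases he with he | he
        · rcases hcov e he with h2 | h2
          · exact Or.inl h2
          · refine Or.inr ?_
            rw [Walk.support_concat, List.mem_append]
            exact Or.inl h2
        · have h2 : e = (⟨s(w, x), h⟩ : G.edgeSet) := Subtype.ext he
          rw [h2]
          exact Or.inr (Walk.end_mem_support _)

end AuxLemmas

/-- if `P` is an isometric `(u,v)`-path of `G` and `e₀` is an edge incident
to `u`, then the vertices of `L(P)` (the edges of `P`) can be covered by two `e₀`-rooted
isometric paths of `L(G)`. -/
theorem line_path_two_rooted_cover (G : SimpleGraph V) (hG : G.Connected)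
    {u v : V} (p : G.Walk u v) (hp : IsometricPath G p)
    (e₀ : G.edgeSet) (he₀ : u ∈ (e₀ : Sym2 V)) :
    ∃ (f₁ f₂ : G.edgeSet) (q₁ : G.lineGraph.Walk e₀ f₁) (q₂ : G.lineGraph.Walk e₀ f₂),
      IsometricPath G.lineGraph q₁ ∧ IsometricPath G.lineGraph q₂ ∧
      ∀ e : G.edgeSet, (e : Sym2 V) ∈ p.edges → e ∈ q₁.support ∨ e ∈ q₂.support := by
  have hnil : IsometricPath G.lineGraph (Walk.nil : G.lineGraph.Walk e₀ e₀) :=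
    ⟨Walk.IsPath.nil, by simp [SimpleGraph.dist_self]⟩
  rcases eq_nil_or_concat p with ⟨rfl, rfl⟩ | ⟨w', p', h', rfl⟩
  · refine ⟨e₀, e₀, Walk.nil, Walk.nil, hnil, hnil, ?_⟩
    intro e he
    simp at he
  · rcases key_lemma_s11 hG e₀ he₀ p'.length p' h' rfl hp with
      ⟨q₂, hiso₂, -, hcov⟩ | ⟨f₁, q₁, q₂, hiso₁, hiso₂, -, hcov⟩
    · exact ⟨e₀, _, Walk.nil, q₂, hnil, hiso₂, fun e he => Or.inr (hcov e he)⟩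
    · exact ⟨f₁, _, q₁, q₂, hiso₁, hiso₂, hcov⟩
end

section
/- Let H be the clique-sum of graphs H₁ and H₂ with common clique C. Let P be an isometric path of H with all vertices in V(H₁) and with one end-vertex in C, and let w be any vertex of H₂. Then the vertices of P can be covered by three w-rooted isometric paths of H. -/
open SimpleGraph

variable {V : Type*}

namespace SimpleGraph.Walk

variable {V : Type*} {G : SimpleGraph V}

/-- The first `n` darts of a walk, as a walk from `u` to `p.getVert n`. -/
def myTake {u v : V} (p : G.Walk u v) (n : ℕ) : G.Walk u (p.getVert n) :=
  match p, n with
  | .nil, _ => .nil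
  | .cons h q, 0 => Walk.nil.copy rfl (getVert_zero (.cons h q)).symm
  | .cons h q, (n + 1) => ((q.myTake n).cons h).copy rfl (getVert_cons_succ _ h).symm

@[simp] lemma length_myTake {u v : V} (p : G.Walk u v) (n : ℕ) :
    (p.myTake n).length = min n p.length := by
  induction p generalizing n with
  | nil => simp [myTake]
  | cons h q ih =>
    cases n with
    | zero => simp [myTake]
    | succ n => simp [myTake, ih]

lemma getVert_mem_support_myTake {u v : V} (p : G.Walk u v) {i n : ℕ} (hin : i ≤ n) :
    p.getVert i ∈ (p.myTake n).support := by
  induction p generalizing i n with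
  | nil => simp [myTake, getVert]
  | cons h q ih =>
    cases n with
    | zero =>
      interval_cases i
      simp [myTake]
    | succ n =>
      cases i with
      | zero => simp [myTake]
      | succ i =>
        simp only [myTake, getVert_cons_succ, support_copy, support_cons, List.mem_cons]
        show q.getVert i ∈ (cons h (q.myTake n)).support
        rw [support_cons, List.mem_cons]
        exact Or.inr (ih (by omega))

@[simp] lemma length_drop' {u v : V} (p : G.Walk u v) (n : ℕ) :
    (p.drop n).length = p.length - n := by
  induction p generalizing n with
  | nil => simp [drop]
  | cons h q ih =>
    cases n with
    | zero => simp [drop]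
    | succ n => simp [drop, ih]

lemma getVert_drop' {u v : V} (p : G.Walk u v) (n i : ℕ) :
    (p.drop n).getVert i = p.getVert (n + i) := by
  induction p generalizing n with
  | nil => simp [drop, getVert]
  | cons h q ih =>
    cases n with
    | zero => simp [drop]
    | succ n =>
      simp only [drop, getVert_copy, ih]
      exact (ih n).trans (by rw [Nat.add_right_comm, getVert_cons_succ])

end SimpleGraph.Walk

/-- Any walk from a vertex of `S₂` to a vertex of `S₁` must meet `S₁ ∩ S₂`, provided
`S₁ ∪ S₂ = univ` and there are no edges between `S₁ \ S₂` and `S₂ \ S₁`. -/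
lemma walk_meets_inter {H : SimpleGraph V} {S₁ S₂ : Set V}
    (hcover : S₁ ∪ S₂ = Set.univ)
    (hsep : ∀ x ∈ S₁ \ S₂, ∀ y ∈ S₂ \ S₁, ¬ H.Adj x y) :
    ∀ {a b : V} (q : H.Walk a b), a ∈ S₂ → b ∈ S₁ →
      ∃ c ∈ q.support, c ∈ S₁ ∩ S₂ := by
  intro a b q
  induction q with
  | nil =>
    intro ha hb
    exact ⟨_, Walk.start_mem_support _, hb, ha⟩
  | @cons a y b h q ih =>
    intro ha hb
    by_cases h1 : a ∈ S₁
    · exact ⟨_, Walk.start_mem_support _, h1, ha⟩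
    · have hy : y ∈ S₂ := by
        by_contra hy2
        have hy1 : y ∈ S₁ := by
          have hyu := Set.mem_univ y
          rw [← hcover] at hyu
          rcases hyu with h' | h'
          · exact h'
          · exact absurd h' hy2
        exact hsep y ⟨hy1, hy2⟩ a ⟨ha, h1⟩ h.symm
      obtain ⟨c, hc, hcC⟩ := ih hy hb
      exact ⟨c, by simp [hc], hcC⟩

/-- let `H` be a clique-sum of `H₁ = H[S₁]` and `H₂ = H[S₂]` with common
clique `C = S₁ ∩ S₂` (so `S₁ ∪ S₂` covers all vertices, `C` is a clique, and there are no
edges between `S₁ \ S₂` and `S₂ \ S₁`). If `P` is an isometric path of `H` with all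
vertices in `S₁` and one end-vertex in `C`, and `w` is any vertex of `H₂`, then the
vertices of `P` can be covered by three `w`-rooted isometric paths of `H`. -/
theorem clique_sum_three_rooted_cover (H : SimpleGraph V) (hH : H.Connected)
    (S₁ S₂ : Set V) (hcover : S₁ ∪ S₂ = Set.univ)
    (hclique : H.IsClique (S₁ ∩ S₂))
    (hsep : ∀ x ∈ S₁ \ S₂, ∀ y ∈ S₂ \ S₁, ¬ H.Adj x y)
    {u v : V} (p : H.Walk u v) (hp : IsometricPath H p)
    (hP : ∀ x ∈ p.support, x ∈ S₁) (hv : v ∈ S₁ ∩ S₂)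
    (w : V) (hw : w ∈ S₂) :
    ∃ (a b c : V) (q₁ : H.Walk w a) (q₂ : H.Walk w b) (q₃ : H.Walk w c),
      IsometricPath H q₁ ∧ IsometricPath H q₂ ∧ IsometricPath H q₃ ∧
      ∀ x ∈ p.support, x ∈ q₁.support ∨ x ∈ q₂.support ∨ x ∈ q₃.support := by
  classical
  set ℓ := p.length with hℓ
  set p' := p.reverse with hp'
  have hp'len : p'.length = ℓ := by simp [hp', hℓ]
  set g : ℕ → V := fun i => p'.getVert i with hg
  have hg0 : g 0 = v := by simp [hg, hp']
  set D : ℕ → ℕ := fun i => H.dist w (g i) with hD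
  have hD0 : D 0 = H.dist w v := by show H.dist w (g 0) = _; rw [hg0]
  -- vertices of the path are in S₁
  have hgS₁ : ∀ i, i ≤ ℓ → g i ∈ S₁ := by
    intro i hi
    apply hP
    have hmem : g i ∈ p'.support :=
      Walk.mem_support_iff_exists_getVert.mpr ⟨i, rfl, by rw [hp'len]; exact hi⟩
    rw [hp', Walk.support_reverse, List.mem_reverse] at hmem
    exact hmem
  have hdvu : H.dist v u = ℓ := by
    rw [H.dist_comm, ← hp.2]
  -- distance from v along the isometric path
  have hvd : ∀ i, i ≤ ℓ → H.dist v (g i) = i := by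
    intro i hi
    have h1 : H.dist v (g i) ≤ i := by
      have h := H.dist_le (p'.myTake i)
      rw [Walk.length_myTake, hp'len] at h
      exact h.trans (min_le_left _ _)
    have h2 : H.dist (g i) u ≤ ℓ - i := by
      have h := H.dist_le (p'.drop i)
      rw [Walk.length_drop', hp'len] at h
      exact h
    have h3 := hH.dist_triangle (u := v) (v := g i) (w := u)
    omega
  -- distances between clique vertices are at most 1
  have hCdist : ∀ c ∈ S₁ ∩ S₂, ∀ c' ∈ S₁ ∩ S₂, H.dist c c' ≤ 1 := by
    intro c hc c' hc'
    rcases eq_or_ne c c' with rfl | hne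
    · rw [H.dist_self]; omega
    · have hadj := hclique hc hc' hne
      have h := H.dist_le (Walk.cons hadj Walk.nil)
      simpa using h
  -- the key lower bound: D 0 + i ≤ D i + 2
  have hlow : ∀ i, i ≤ ℓ → D 0 + i ≤ D i + 2 := by
    intro i hi
    obtain ⟨W, hW⟩ := hH.exists_walk_length_eq_dist w (g i)
    obtain ⟨c, hcW, hcC⟩ := walk_meets_inter hcover hsep W hw (hgS₁ i hi)
    have hsplit : H.dist w c + H.dist c (g i) ≤ H.dist w (g i) := by
      rw [← hW]
      calc H.dist w c + H.dist c (g i)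
          ≤ (W.takeUntil c hcW).length + (W.dropUntil c hcW).length :=
            Nat.add_le_add (H.dist_le _) (H.dist_le _)
        _ = W.length := by rw [← Walk.length_append, W.take_spec hcW]
    have h1 : H.dist w v ≤ H.dist w c + 1 := by
      have ht := hH.dist_triangle (u := w) (v := c) (w := v)
      have h2 := hCdist c hcC v hv
      omega
    have h3 : H.dist v (g i) ≤ 1 + H.dist c (g i) := by
      have ht := hH.dist_triangle (u := v) (v := c) (w := g i)
      have h4 := hCdist v hv c hcC
      omega
    have h5 := hvd i hi
    have e1 : D i = H.dist w (g i) := rfl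
    omega
  -- one step of the antitone property
  have hstep : ∀ i, i < ℓ → D (i + 1) ≤ D i + 1 := by
    intro i hi
    have hadj : H.Adj (g i) (g (i + 1)) := p'.adj_getVert_succ (by omega)
    have h1 := hH.dist_triangle (u := w) (v := g i) (w := g (i + 1))
    have h2 : H.dist (g i) (g (i + 1)) ≤ 1 := by
      have h := H.dist_le (Walk.cons hadj Walk.nil)
      simpa using h
    have e1 : D (i + 1) = H.dist w (g (i + 1)) := rfl
    have e2 : D i = H.dist w (g i) := rfl
    omega
  -- the antitone property: D j - j is non-increasing
  have hmono : ∀ j, j ≤ ℓ → ∀ i, i ≤ j → D j + i ≤ D i + j := by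
    intro j
    induction j with
    | zero =>
      intro _ i hi
      have h0 : i = 0 := Nat.le_zero.mp hi
      subst h0
      omega
    | succ k ih =>
      intro hk i hi
      rcases Nat.eq_or_lt_of_le hi with h | h
      · subst h; omega
      · have h1 := ih (by omega) i (by omega)
        have h2 := hstep k (by omega)
        omega
  -- the builder: for a "constant slope" interval, produce one rooted isometric path
  have build : ∀ s t : ℕ, s ≤ t → t ≤ ℓ → D t + s = D s + t →
      ∃ (x : V) (q : H.Walk w x), IsometricPath H q ∧
        ∀ i, s ≤ i → i ≤ t → g i ∈ q.support := by
    intro s t hst htl hf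
    obtain ⟨R, hR⟩ := hH.exists_walk_length_eq_dist w (g s)
    have hend : (p'.drop s).getVert (t - s) = p'.getVert t := by
      rw [Walk.getVert_drop']; congr 1; omega
    set seg := ((p'.drop s).myTake (t - s)).copy rfl hend with hseg
    set Q := R.append seg with hQdef
    have hlenseg : seg.length = t - s := by
      rw [hseg, Walk.length_copy, Walk.length_myTake, Walk.length_drop', hp'len,
        Nat.min_eq_left (by omega)]
    have hQlen : Q.length = H.dist w (g t) := by
      have hL : Q.length = R.length + seg.length := Walk.length_append _ _
      have e1 : D s = H.dist w (g s) := rfl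
      have e2 : D t = H.dist w (g t) := rfl
      rw [hL, hR, hlenseg]
      omega
    refine ⟨p'.getVert t, Q, ⟨Q.isPath_of_length_eq_dist hQlen, hQlen⟩, ?_⟩
    intro i hsi hit
    apply (Walk.mem_support_append_iff _ _).mpr
    right
    have hgi : (p'.drop s).getVert (i - s) = g i := by
      rw [Walk.getVert_drop']
      show p'.getVert (s + (i - s)) = p'.getVert i
      congr 1; omega
    rw [hseg, Walk.support_copy, ← hgi]
    exact Walk.getVert_mem_support_myTake _ (by omega)
  -- breakpoints
  set a := Nat.findGreatest (fun i => D 0 + i ≤ D i) ℓ with ha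
  set b := Nat.findGreatest (fun i => D 0 + i ≤ D i + 1) ℓ with hb
  have ha_le : a ≤ ℓ := Nat.findGreatest_le ℓ
  have hb_le : b ≤ ℓ := Nat.findGreatest_le ℓ
  have haP : D 0 + a ≤ D a := by
    have h := Nat.findGreatest_spec (P := fun i => D 0 + i ≤ D i)
      (Nat.zero_le ℓ) (by omega)
    rwa [← ha] at h
  have hbP : D 0 + b ≤ D b + 1 := by
    have h := Nat.findGreatest_spec (P := fun i => D 0 + i ≤ D i + 1)
      (Nat.zero_le ℓ) (by omega)
    rwa [← hb] at h
  have hab : a ≤ b := by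
    by_contra hab
    have h := Nat.findGreatest_is_greatest (P := fun i => D 0 + i ≤ D i + 1) (n := ℓ)
      (k := a) (by rw [← hb]; omega) ha_le
    exact h (by omega)
  -- first path : covers indices in [0, a]
  obtain ⟨x₁, q₁, hq₁, hcov₁⟩ := build 0 a (Nat.zero_le a) ha_le
    (by have h := hmono a ha_le 0 (Nat.zero_le a); omega)
  -- second path : covers indices in (a, b]
  obtain ⟨x₂, q₂, hq₂, hcov₂⟩ :
      ∃ (x : V) (q : H.Walk w x), IsometricPath H q ∧
        ∀ i, a < i → i ≤ b → g i ∈ q.support := by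
    rcases lt_or_ge a b with hlt | hge
    · have hna : ¬ (D 0 + (a + 1) ≤ D (a + 1)) := by
        apply Nat.findGreatest_is_greatest (P := fun i => D 0 + i ≤ D i) (n := ℓ)
        · rw [← ha]; omega
        · omega
      have hm := hmono b hb_le (a + 1) (by omega)
      obtain ⟨x, q, hq, hc⟩ := build (a + 1) b (by omega) hb_le (by omega)
      exact ⟨x, q, hq, fun i h1 h2 => hc i (by omega) h2⟩
    · exact ⟨x₁, q₁, hq₁, fun i h1 h2 => absurd h2 (by omega)⟩
  -- third path : covers indices in (b, ℓ]
  obtain ⟨x₃, q₃, hq₃, hcov₃⟩ :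
      ∃ (x : V) (q : H.Walk w x), IsometricPath H q ∧
        ∀ i, b < i → i ≤ ℓ → g i ∈ q.support := by
    rcases lt_or_ge b ℓ with hlt | hge
    · have hnb : ¬ (D 0 + (b + 1) ≤ D (b + 1) + 1) := by
        apply Nat.findGreatest_is_greatest (P := fun i => D 0 + i ≤ D i + 1) (n := ℓ)
        · rw [← hb]; omega
        · omega
      have hm := hmono ℓ le_rfl (b + 1) (by omega)
      have hl := hlow ℓ le_rfl
      obtain ⟨x, q, hq, hc⟩ := build (b + 1) ℓ (by omega) le_rfl (by omega)
      exact ⟨x, q, hq, fun i h1 h2 => hc i (by omega) h2⟩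
    · exact ⟨x₁, q₁, hq₁, fun i h1 h2 => absurd h2 (by omega)⟩
  refine ⟨x₁, x₂, x₃, q₁, q₂, q₃, hq₁, hq₂, hq₃, ?_⟩
  intro x hx
  have hx' : x ∈ p'.support := by
    rw [hp', Walk.support_reverse, List.mem_reverse]; exact hx
  obtain ⟨i, hgi, hil⟩ := Walk.mem_support_iff_exists_getVert.mp hx'
  rw [hp'len] at hil
  rcases le_or_gt i a with h1 | h1
  · exact Or.inl (hgi ▸ hcov₁ i (Nat.zero_le i) h1)
  · rcases le_or_gt i b with h2 | h2
    · exact Or.inr (Or.inl (hgi ▸ hcov₂ i h1 h2))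
    · exact Or.inr (Or.inr (hgi ▸ hcov₃ i h2 hil))
end
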